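/- arXiv:2306.10495 — 10 statements merged into one kernel-verified Lean document; each statement's English description precedes it below -/
import Mathlib

section
/- If y ∈ ℝ^n is a nonnegative solution of the multi-linear system (I∘e^{∘(k-2)} − α P̄) y^{k-1} = v, where P̄ is a columnwise-substochastic tensor of order k and dimension n, v is a stochastic vector, and α ∈ [0,1), then e^T y ≤ (1−α)^{−1/(k−1)}. -/
open Finset Real

noncomputable def contr {n m : ℕ} (P : Fin n → (Fin m → Fin n) → ℝ) (y : Fin n → ℝ) : Fin n → ℝ :=
  fun i => ∑ j : Fin m → Fin n, P i j * ∏ s, y (j s)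

theorem mlppr_solution_bound (n k : ℕ) (hn : 0 < n) (hk : 2 ≤ k)
    (P : Fin n → (Fin (k-1) → Fin n) → ℝ)
    (hP0 : ∀ i j, 0 ≤ P i j) (hPs : ∀ j, ∑ i, P i j ≤ 1)
    (v : Fin n → ℝ) (hv0 : ∀ i, 0 ≤ v i) (hv1 : ∑ i, v i = 1)
    (α : ℝ) (hα0 : 0 ≤ α) (hα1 : α < 1)
    (y : Fin n → ℝ) (hy : ∀ i, 0 ≤ y i)
    (heq : ∀ i, (∑ l, y l) ^ (k-2) * y i - α * contr P y i = v i) :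
    ∑ i, y i ≤ (1 - α) ^ (-(1:ℝ)/((k:ℝ)-1)) := by
  set S := ∑ l, y l with hSdef
  have hS : 0 ≤ S := Finset.sum_nonneg fun i _ => hy i
  have hkm : k - 2 + 1 = k - 1 := by omega
  -- key sum identity: S^(k-1) over all functions
  have hprod : S ^ (k-1) = ∑ j : Fin (k-1) → Fin n, ∏ s, y (j s) := by
    rw [hSdef, ← Fin.prod_const (k-1) (∑ l, y l), Finset.prod_univ_sum]
    simp
  have hC0 : 0 ≤ ∑ i, contr P y i :=
    Finset.sum_nonneg fun i _ => Finset.sum_nonneg fun j _ =>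
      mul_nonneg (hP0 i j) (Finset.prod_nonneg fun s _ => hy _)
  have hCle : ∑ i, contr P y i ≤ S ^ (k-1) := by
    rw [hprod]
    unfold contr
    rw [Finset.sum_comm]
    apply Finset.sum_le_sum
    intro j _
    rw [← Finset.sum_mul]
    have hp : 0 ≤ ∏ s, y (j s) := Finset.prod_nonneg fun s _ => hy _
    calc (∑ i, P i j) * ∏ s, y (j s) ≤ 1 * ∏ s, y (j s) :=
          mul_le_mul_of_nonneg_right (hPs j) hp
      _ = ∏ s, y (j s) := one_mul _
  have hsum : S ^ (k-1) - α * ∑ i, contr P y i = 1 := by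
    have := Finset.sum_congr rfl (fun i (_ : i ∈ Finset.univ) => heq i)
    rw [hv1] at this
    rw [← this, Finset.sum_sub_distrib, ← Finset.mul_sum, ← Finset.mul_sum]
    rw [← hSdef, ← pow_succ, hkm]
  have hkey : (1 - α) * S ^ (k-1) ≤ 1 := by
    have h1 : α * ∑ i, contr P y i ≤ α * S ^ (k-1) :=
      mul_le_mul_of_nonneg_left hCle hα0
    nlinarith [hsum]
  have h1α : 0 < 1 - α := by linarith
  have hpow : S ^ (k-1) ≤ (1 - α)⁻¹ := by
    rw [← one_div, le_div_iff₀ h1α]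
    linarith [hkey]
  have h1 : 1 ≤ k := by omega
  have hm : (0:ℝ) < ((k-1:ℕ):ℝ) := by
    have : 0 < k - 1 := by omega
    exact_mod_cast this
  calc S = (S ^ (k-1) : ℝ) ^ ((1:ℝ)/((k-1:ℕ):ℝ)) := by
        rw [← Real.rpow_natCast S (k-1), ← Real.rpow_mul hS,
          mul_one_div, div_self hm.ne', Real.rpow_one]
    _ ≤ ((1-α)⁻¹) ^ ((1:ℝ)/((k-1:ℕ):ℝ)) :=
        Real.rpow_le_rpow (by positivity) hpow (by positivity)
    _ = (1-α) ^ (-(1:ℝ)/((k:ℝ)-1)) := by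
        rw [← Real.rpow_neg_one (1-α), ← Real.rpow_mul h1α.le,
          Nat.cast_sub h1]
        norm_num
        ring_nf
end

section
/- Let Δ = {y ∈ ℝ^n_+ : e^T y ≤ (1−α)^{−1/(k−1)}} and define Φ(y) = (1 + α e^T(P̄ y^{k-1}))^{−(k−2)/(k−1)} (v + α P̄ y^{k-1}). Then y ∈ Δ solves the MLPPR system (e^T y)^{k-2} y − α P̄ y^{k-1} = v if and only if y is a fixed point of Φ. -/
open Finset Real

noncomputable def Phi {n : ℕ} (k : ℕ) (P : Fin n → (Fin (k-1) → Fin n) → ℝ) (v : Fin n → ℝ)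
    (α : ℝ) (y : Fin n → ℝ) : Fin n → ℝ :=
  fun i => (1 + α * ∑ l, contr P y l) ^ (-((k:ℝ)-2)/((k:ℝ)-1)) * (v i + α * contr P y i)

theorem mlppr_iff_fixed_point (n k : ℕ) (hn : 0 < n) (hk : 2 ≤ k)
    (P : Fin n → (Fin (k-1) → Fin n) → ℝ)
    (hP0 : ∀ i j, 0 ≤ P i j) (hPs : ∀ j, ∑ i, P i j ≤ 1)
    (v : Fin n → ℝ) (hv0 : ∀ i, 0 ≤ v i) (hv1 : ∑ i, v i = 1)
    (α : ℝ) (hα0 : 0 ≤ α) (hα1 : α < 1)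
    (y : Fin n → ℝ) (hy : ∀ i, 0 ≤ y i)
    (hyΔ : ∑ i, y i ≤ (1 - α) ^ (-(1:ℝ)/((k:ℝ)-1))) :
    (∀ i, (∑ l, y l) ^ (k-2) * y i - α * contr P y i = v i) ↔ Phi k P v α y = y := by
  have hcontr : ∀ i, 0 ≤ contr P y i := by
    intro i
    apply Finset.sum_nonneg
    intro j _
    exact mul_nonneg (hP0 i j) (Finset.prod_nonneg (fun s _ => hy _))
  set c : ℝ := ∑ l, contr P y l with hc
  set S : ℝ := ∑ l, y l with hS
  set e : ℝ := -((k:ℝ)-2)/((k:ℝ)-1) with he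
  have hc0 : 0 ≤ c := Finset.sum_nonneg fun l _ => hcontr l
  have ht : (0:ℝ) < 1 + α * c := by nlinarith [mul_nonneg hα0 hc0]
  have hS0 : 0 ≤ S := Finset.sum_nonneg fun l _ => hy l
  have hK2 : (2:ℝ) ≤ (k:ℝ) := by exact_mod_cast hk
  have hKne : (k:ℝ) - 1 ≠ 0 := by linarith
  have hc1 : ((k-1:ℕ):ℝ) = (k:ℝ) - 1 := by
    have : (1:ℕ) ≤ k := by omega
    push_cast [this]; ring
  have hc2 : ((k-2:ℕ):ℝ) = (k:ℝ) - 2 := by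
    push_cast [hk]; ring
  constructor
  · intro h
    have hsum : S ^ (k-2) * S - α * c = 1 := by
      have := Finset.sum_congr rfl (fun i (_ : i ∈ Finset.univ) => h i)
      rw [hv1] at this
      rw [← this, Finset.sum_sub_distrib, ← Finset.mul_sum, ← Finset.mul_sum]
    have hpow : S ^ (k-2) * S = S ^ (k-1) := by
      rw [← pow_succ]; congr 1; omega
    have hSk : S ^ (k-1) = 1 + α * c := by rw [← hpow]; linarith
    have hSpos : 0 < S := by
      rcases hS0.lt_or_eq with h' | h'
      · exact h'
      · exfalso
        rw [← h', zero_pow (by omega : k - 1 ≠ 0)] at hSk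
        linarith
    funext i
    show (1 + α * c) ^ e * (v i + α * contr P y i) = y i
    have h1 : v i + α * contr P y i = S ^ (k-2) * y i := by linarith [h i]
    rw [h1, ← hSk, ← Real.rpow_natCast S (k-1), ← Real.rpow_natCast S (k-2),
      ← Real.rpow_mul hS0]
    have hexp : ((k-1:ℕ):ℝ) * e = -((k-2:ℕ):ℝ) := by
      rw [hc1, hc2, he]; field_simp
    rw [hexp, ← mul_assoc, ← Real.rpow_add hSpos]
    simp
  · intro h i
    have hi : ∀ j, (1 + α * c) ^ e * (v j + α * contr P y j) = y j := by
      intro j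
      have := congrFun h j
      exact this
    have hsum : (1 + α * c) ^ (e + 1) = S := by
      rw [Real.rpow_add ht, Real.rpow_one, hS]
      rw [← Finset.sum_congr rfl (fun j (_ : j ∈ Finset.univ) => hi j)]
      rw [← Finset.mul_sum, Finset.sum_add_distrib, ← Finset.mul_sum, ← hc, hv1]
    have he1 : e + 1 = 1/((k:ℝ)-1) := by rw [he]; field_simp; ring
    have hSt : S = (1 + α * c) ^ ((1:ℝ)/((k:ℝ)-1)) := by rw [← he1, hsum]
    have hSpos : 0 < S := hSt ▸ Real.rpow_pos_of_pos ht _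
    have hkey : S ^ (k-2) * (1 + α * c) ^ e = 1 := by
      rw [hSt, ← Real.rpow_natCast _ (k-2), ← Real.rpow_mul ht.le, ← Real.rpow_add ht]
      rw [hc2, he]
      rw [show (1:ℝ)/((k:ℝ)-1) * ((k:ℝ)-2) + -((k:ℝ)-2)/((k:ℝ)-1) = 0 by field_simp; ring]
      exact Real.rpow_zero _
    rw [← hi i, ← mul_assoc, hkey, one_mul]
    ring
end

section
/- The map Φ(y) = (1 + α e^T(P̄ y^{k-1}))^{−(k−2)/(k−1)} (v + α P̄ y^{k-1}) maps the set Δ = {y ∈ ℝ^n_+ : e^T y ≤ (1−α)^{−1/(k−1)}} into itself. -/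
open Finset Real

theorem Phi_maps_Delta_into_itself (n k : ℕ) (hn : 0 < n) (hk : 2 ≤ k)
    (P : Fin n → (Fin (k-1) → Fin n) → ℝ)
    (hP0 : ∀ i j, 0 ≤ P i j) (hPs : ∀ j, ∑ i, P i j ≤ 1)
    (v : Fin n → ℝ) (hv0 : ∀ i, 0 ≤ v i) (hv1 : ∑ i, v i = 1)
    (α : ℝ) (hα0 : 0 ≤ α) (hα1 : α < 1)
    (y : Fin n → ℝ) (hy : ∀ i, 0 ≤ y i)
    (hyΔ : ∑ i, y i ≤ (1 - α) ^ (-(1:ℝ)/((k:ℝ)-1))) :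
    (∀ i, 0 ≤ Phi k P v α y i) ∧ ∑ i, Phi k P v α y i ≤ (1 - α) ^ (-(1:ℝ)/((k:ℝ)-1)) := by
  have hα' : 0 < 1 - α := by linarith
  have hkc : (2:ℝ) ≤ (k:ℝ) := by exact_mod_cast hk
  have hk1 : (0:ℝ) < (k:ℝ) - 1 := by linarith
  have hmc : ((k - 1 : ℕ) : ℝ) = (k:ℝ) - 1 := by
    have := Nat.cast_sub (by omega : 1 ≤ k) (R := ℝ)
    simpa using this
  have hcontr0 : ∀ i, 0 ≤ contr P y i := fun i =>
    Finset.sum_nonneg fun j _ => mul_nonneg (hP0 i j)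
      (Finset.prod_nonneg fun s _ => hy _)
  set S := ∑ l, contr P y l with hSdef
  have hS0 : 0 ≤ S := Finset.sum_nonneg fun l _ => hcontr0 l
  have hbase : (0:ℝ) < 1 + α * S := by nlinarith
  -- S ≤ (∑ y)^(k-1)
  have hexp : (∑ i, y i) ^ (k - 1) = ∑ j : Fin (k-1) → Fin n, ∏ s, y (j s) := by
    rw [← Fintype.piFinset_univ, ← Finset.prod_univ_sum]
    simp
  have hSle : S ≤ (∑ i, y i) ^ (k - 1) := by
    rw [hexp, hSdef]
    unfold contr
    rw [Finset.sum_comm]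
    refine Finset.sum_le_sum fun j _ => ?_
    rw [← Finset.sum_mul]
    calc (∑ i, P i j) * ∏ s, y (j s) ≤ 1 * ∏ s, y (j s) :=
          mul_le_mul_of_nonneg_right (hPs j) (Finset.prod_nonneg fun s _ => hy _)
      _ = ∏ s, y (j s) := one_mul _
  -- (∑ y)^(k-1) ≤ (1-α)⁻¹
  have hpow : ((1 - α) ^ (-(1:ℝ)/((k:ℝ)-1))) ^ (k - 1 : ℕ) = (1 - α)⁻¹ := by
    rw [← Real.rpow_natCast ((1 - α) ^ (-(1:ℝ)/((k:ℝ)-1))) (k-1), ← Real.rpow_mul hα'.le,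
      hmc]
    rw [div_mul_cancel₀ (-(1:ℝ)) (by linarith : (k:ℝ) - 1 ≠ 0)]
    simp [Real.rpow_neg_one]
  have hSle' : S ≤ (1 - α)⁻¹ := by
    calc S ≤ (∑ i, y i) ^ (k - 1) := hSle
      _ ≤ ((1 - α) ^ (-(1:ℝ)/((k:ℝ)-1))) ^ (k - 1 : ℕ) :=
          pow_le_pow_left₀ (Finset.sum_nonneg fun i _ => hy i) hyΔ _
      _ = (1 - α)⁻¹ := hpow
  have hbase_le : 1 + α * S ≤ (1 - α)⁻¹ := by
    have h1 : α * S ≤ α * (1 - α)⁻¹ := mul_le_mul_of_nonneg_left hSle' hα0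
    have h2 : 1 + α * (1 - α)⁻¹ = (1 - α)⁻¹ := by field_simp; ring
    linarith
  constructor
  · intro i
    exact mul_nonneg (Real.rpow_nonneg hbase.le _)
      (add_nonneg (hv0 i) (mul_nonneg hα0 (hcontr0 i)))
  · have hsum : ∑ i, Phi k P v α y i
        = (1 + α * S) ^ (-((k:ℝ)-2)/((k:ℝ)-1)) * (1 + α * S) := by
      unfold Phi
      rw [← Finset.mul_sum, Finset.sum_add_distrib, hv1, ← Finset.mul_sum, ← hSdef]
    rw [hsum]
    have : (1 + α * S) ^ (-((k:ℝ)-2)/((k:ℝ)-1)) * (1 + α * S)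
        = (1 + α * S) ^ ((1:ℝ)/((k:ℝ)-1)) := by
      nth_rewrite 2 [← Real.rpow_one (1 + α * S)]
      rw [← Real.rpow_add hbase]
      congr 1
      field_simp
      ring
    rw [this]
    have hrhs : (1 - α) ^ (-(1:ℝ)/((k:ℝ)-1)) = ((1 - α)⁻¹) ^ ((1:ℝ)/((k:ℝ)-1)) := by
      rw [Real.inv_rpow hα'.le, ← Real.rpow_neg hα'.le]
      congr 1
      ring
    rw [hrhs]
    exact Real.rpow_le_rpow hbase.le hbase_le (by positivity)
end

section
/- Define φ(z) = (e^T z)^{−(k−2)/(k−1)} z on Ξ = {z ∈ ℝ^n_+ : e^T z ≥ 1}. Then for all a, b ∈ Ξ, ‖φ(a) − φ(b)‖_1 ≤ ((2k−3)/(k−1)) ‖a − b‖_1. -/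
open Finset Real

lemma key_lip (n : ℕ) (α : ℝ) (hα0 : 0 ≤ α) (hα1 : α ≤ 1)
    (a b : Fin n → ℝ) (hb0 : ∀ i, 0 ≤ b i)
    (ha1 : 1 ≤ ∑ i, a i) (hb1 : 1 ≤ ∑ i, b i) (hBA : ∑ i, b i ≤ ∑ i, a i) :
    ∑ i, |(∑ l, a l) ^ (-α) * a i - (∑ l, b l) ^ (-α) * b i| ≤
      (1 + α) * ∑ i, |a i - b i| := by
  set A := ∑ l, a l with hA
  set B := ∑ l, b l with hB
  have hApos : (0:ℝ) < A := lt_of_lt_of_le one_pos ha1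
  have hBpos : (0:ℝ) < B := lt_of_lt_of_le one_pos hb1
  have hnα : -α ≤ 0 := neg_nonpos.mpr hα0
  have hA1 : A ^ (-α) ≤ 1 := Real.rpow_le_one_of_one_le_of_nonpos ha1 hnα
  have hAnn : 0 ≤ A ^ (-α) := Real.rpow_nonneg hApos.le _
  have hmono : A ^ (-α) ≤ B ^ (-α) := Real.rpow_le_rpow_of_nonpos hBpos hBA hnα
  -- Bernoulli : (A/B)^α ≤ 1 + α*(A/B - 1)
  have hber : (A / B) ^ α ≤ 1 + α * (A / B - 1) := by
    have hs : (-1:ℝ) ≤ A / B - 1 := by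
      have : 0 ≤ A / B := div_nonneg hApos.le hBpos.le
      linarith
    have := rpow_one_add_le_one_add_mul_self hs hα0 hα1
    simpa using this
  have hfact : B ^ (-α) = A ^ (-α) * (A / B) ^ α := by
    rw [Real.div_rpow hApos.le hBpos.le, Real.rpow_neg hApos.le, Real.rpow_neg hBpos.le]
    have hAα : A ^ α ≠ 0 := ne_of_gt (Real.rpow_pos_of_pos hApos _)
    have hBα : B ^ α ≠ 0 := ne_of_gt (Real.rpow_pos_of_pos hBpos _)
    field_simp
  have hdiff : (B ^ (-α) - A ^ (-α)) * B ≤ α * (A - B) := by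
    have h1 : B ^ (-α) - A ^ (-α) ≤ A ^ (-α) * (α * (A / B - 1)) := by
      rw [hfact]
      have := mul_le_mul_of_nonneg_left hber hAnn
      nlinarith
    have h2 : (B ^ (-α) - A ^ (-α)) * B ≤ A ^ (-α) * (α * (A - B)) := by
      have := mul_le_mul_of_nonneg_right h1 hBpos.le
      calc (B ^ (-α) - A ^ (-α)) * B ≤ A ^ (-α) * (α * (A / B - 1)) * B := this
        _ = A ^ (-α) * (α * (A - B)) := by field_simp
    calc (B ^ (-α) - A ^ (-α)) * B ≤ A ^ (-α) * (α * (A - B)) := h2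
      _ ≤ 1 * (α * (A - B)) := by
          apply mul_le_mul_of_nonneg_right hA1
          have : 0 ≤ A - B := by linarith
          positivity
      _ = α * (A - B) := one_mul _
  have hterm : ∀ i, |A ^ (-α) * a i - B ^ (-α) * b i| ≤
      A ^ (-α) * |a i - b i| + (B ^ (-α) - A ^ (-α)) * b i := by
    intro i
    have heq : A ^ (-α) * a i - B ^ (-α) * b i
        = A ^ (-α) * (a i - b i) - (B ^ (-α) - A ^ (-α)) * b i := by ring
    rw [heq]
    refine (abs_sub _ _).trans ?_
    rw [abs_mul, abs_of_nonneg hAnn, abs_mul,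
      abs_of_nonneg (by linarith [hmono] : (0:ℝ) ≤ B ^ (-α) - A ^ (-α)),
      abs_of_nonneg (hb0 i)]
  have hS : 0 ≤ ∑ i, |a i - b i| := Finset.sum_nonneg fun i _ => abs_nonneg _
  have hABle : A - B ≤ ∑ i, |a i - b i| := by
    rw [hA, hB, ← Finset.sum_sub_distrib]
    exact Finset.sum_le_sum fun i _ => le_abs_self _
  calc ∑ i, |A ^ (-α) * a i - B ^ (-α) * b i|
      ≤ ∑ i, (A ^ (-α) * |a i - b i| + (B ^ (-α) - A ^ (-α)) * b i) :=
        Finset.sum_le_sum fun i _ => hterm i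
    _ = A ^ (-α) * ∑ i, |a i - b i| + (B ^ (-α) - A ^ (-α)) * B := by
        rw [Finset.sum_add_distrib, ← Finset.mul_sum, ← Finset.mul_sum, hB]
    _ ≤ 1 * ∑ i, |a i - b i| + α * (A - B) := by
        gcongr
    _ ≤ 1 * ∑ i, |a i - b i| + α * ∑ i, |a i - b i| := by
        have := mul_le_mul_of_nonneg_left hABle hα0
        linarith
    _ = (1 + α) * ∑ i, |a i - b i| := by ring

theorem phi_map_lipschitz (n k : ℕ) (hn : 0 < n) (hk : 2 ≤ k)
    (a b : Fin n → ℝ) (ha0 : ∀ i, 0 ≤ a i) (hb0 : ∀ i, 0 ≤ b i)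
    (ha1 : 1 ≤ ∑ i, a i) (hb1 : 1 ≤ ∑ i, b i) :
    ∑ i, |(∑ l, a l) ^ (-((k:ℝ)-2)/((k:ℝ)-1)) * a i -
            (∑ l, b l) ^ (-((k:ℝ)-2)/((k:ℝ)-1)) * b i| ≤
      ((2*(k:ℝ)-3)/((k:ℝ)-1)) * ∑ i, |a i - b i| := by
  have hk1 : (1:ℝ) ≤ (k:ℝ) - 1 := by
    have : (2:ℝ) ≤ (k:ℝ) := by exact_mod_cast hk
    linarith
  have hk1pos : (0:ℝ) < (k:ℝ) - 1 := by linarith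
  set α : ℝ := ((k:ℝ) - 2) / ((k:ℝ) - 1) with hαdef
  have hα0 : 0 ≤ α := by
    apply div_nonneg _ hk1pos.le
    have : (2:ℝ) ≤ (k:ℝ) := by exact_mod_cast hk
    linarith
  have hα1 : α ≤ 1 := by
    rw [hαdef, div_le_one hk1pos]; linarith
  have hexp : -((k:ℝ)-2)/((k:ℝ)-1) = -α := by
    rw [hαdef, neg_div]
  have hcoef : (2*(k:ℝ)-3)/((k:ℝ)-1) = 1 + α := by
    rw [hαdef]; field_simp; ring
  rw [hcoef]
  simp only [hexp]
  rcases le_total (∑ i, b i) (∑ i, a i) with h | h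
  · exact key_lip n α hα0 hα1 a b hb0 ha1 hb1 h
  · have := key_lip n α hα0 hα1 b a ha0 hb1 ha1 h
    calc ∑ i, |(∑ l, a l) ^ (-α) * a i - (∑ l, b l) ^ (-α) * b i|
        = ∑ i, |(∑ l, b l) ^ (-α) * b i - (∑ l, a l) ^ (-α) * a i| := by
          apply Finset.sum_congr rfl; intro i _; rw [abs_sub_comm]
      _ ≤ (1 + α) * ∑ i, |b i - a i| := this
      _ = (1 + α) * ∑ i, |a i - b i| := by
          congr 1; apply Finset.sum_congr rfl; intro i _; rw [abs_sub_comm]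
end

section
/- Let ς = (2k−3) α (1−α)^{−(k−2)/(k−1)}. If ς < 1, then Φ is a contraction on Δ with respect to the 1-norm: ‖Φ(x) − Φ(y)‖_1 ≤ ς ‖x − y‖_1 for all x, y ∈ Δ. -/
open Finset Real

lemma sum_prod_eq {n : ℕ} (m : ℕ) (z : Fin n → ℝ) :
    ∑ j : Fin m → Fin n, ∏ s, z (j s) = (∑ i, z i) ^ m := by
  rw [← Fintype.piFinset_univ, ← Finset.prod_univ_sum (fun _ : Fin m => (univ : Finset (Fin n)))
    (fun _ j => z j), prod_const, card_univ, Fintype.card_fin]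

lemma sum_pi_succ {n m : ℕ} (F : (Fin (m+1) → Fin n) → ℝ) :
    ∑ j : Fin (m+1) → Fin n, F j
      = ∑ i : Fin n, ∑ j : Fin m → Fin n, F (Fin.cons i j) := by
  rw [← Fintype.sum_prod_type (f := fun p : Fin n × (Fin m → Fin n) => F (Fin.cons p.1 p.2))]
  exact (Fintype.sum_equiv (Fin.consEquiv (fun _ => Fin n)) _ _ (fun p => rfl)).symm

lemma sum_abs_prod_sub {n : ℕ} (m : ℕ) {r : ℝ} (hr : 0 ≤ r) :
    ∀ x y : Fin n → ℝ, (∀ i, 0 ≤ x i) → (∀ i, 0 ≤ y i) →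
    (∑ i, x i ≤ r) → (∑ i, y i ≤ r) →
    ∑ j : Fin (m+1) → Fin n, |∏ s, x (j s) - ∏ s, y (j s)|
      ≤ (m+1) * r ^ m * ∑ i, |x i - y i| := by
  induction m with
  | zero =>
    intro x y hx hy hxr hyr
    rw [sum_pi_succ]
    simp [Fin.prod_univ_succ]
  | succ m ih =>
    intro x y hx hy hxr hyr
    rw [sum_pi_succ]
    have hY : (0:ℝ) ≤ ∑ i, y i := Finset.sum_nonneg fun i _ => hy i
    have hD : (0:ℝ) ≤ ∑ i, |x i - y i| := Finset.sum_nonneg fun i _ => abs_nonneg _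
    have step : ∀ i : Fin n, ∑ j : Fin (m+1) → Fin n,
        |∏ s, x ((Fin.cons i j : Fin _ → Fin n) s) - ∏ s, y ((Fin.cons i j : Fin _ → Fin n) s)|
        ≤ |x i - y i| * (∑ l, y l) ^ (m+1) + x i * ((m+1) * r ^ m * ∑ l, |x l - y l|) := by
      intro i
      have hpt : ∀ j : Fin (m+1) → Fin n,
          |∏ s, x ((Fin.cons i j : Fin _ → Fin n) s) - ∏ s, y ((Fin.cons i j : Fin _ → Fin n) s)|
          ≤ |x i - y i| * ∏ s, y (j s) + x i * |∏ s, x (j s) - ∏ s, y (j s)| := by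
        intro j
        have e1 : ∏ s, x ((Fin.cons i j : Fin _ → Fin n) s) = x i * ∏ s, x (j s) := by
          rw [Fin.prod_univ_succ]; simp
        have e2 : ∏ s, y ((Fin.cons i j : Fin _ → Fin n) s) = y i * ∏ s, y (j s) := by
          rw [Fin.prod_univ_succ]; simp
        rw [e1, e2]
        have : x i * ∏ s, x (j s) - y i * ∏ s, y (j s)
            = (x i - y i) * ∏ s, y (j s) + x i * (∏ s, x (j s) - ∏ s, y (j s)) := by ring
        rw [this]
        refine (abs_add_le _ _).trans ?_
        rw [abs_mul, abs_mul, abs_of_nonneg (Finset.prod_nonneg fun s _ => hy _),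
          abs_of_nonneg (hx i)]
      calc ∑ j : Fin (m+1) → Fin n, |∏ s, x ((Fin.cons i j : Fin _ → Fin n) s) - ∏ s, y ((Fin.cons i j : Fin _ → Fin n) s)|
          ≤ ∑ j : Fin (m+1) → Fin n,
            (|x i - y i| * ∏ s, y (j s) + x i * |∏ s, x (j s) - ∏ s, y (j s)|) :=
            Finset.sum_le_sum fun j _ => hpt j
        _ = |x i - y i| * (∑ l, y l) ^ (m+1)
            + x i * ∑ j : Fin (m+1) → Fin n, |∏ s, x (j s) - ∏ s, y (j s)| := by
            rw [Finset.sum_add_distrib, ← Finset.mul_sum, ← Finset.mul_sum, sum_prod_eq]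
        _ ≤ _ := by
            have := ih x y hx hy hxr hyr
            nlinarith [abs_nonneg (x i - y i), hx i]
    calc ∑ i : Fin n, ∑ j : Fin (m+1) → Fin n,
          |∏ s, x ((Fin.cons i j : Fin _ → Fin n) s) - ∏ s, y ((Fin.cons i j : Fin _ → Fin n) s)|
        ≤ ∑ i : Fin n, (|x i - y i| * (∑ l, y l) ^ (m+1)
            + x i * ((m+1) * r ^ m * ∑ l, |x l - y l|)) :=
          Finset.sum_le_sum fun i _ => step i
      _ = (∑ l, y l) ^ (m+1) * ∑ i, |x i - y i|
          + (∑ i, x i) * ((m+1) * r ^ m * ∑ l, |x l - y l|) := by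
          rw [Finset.sum_add_distrib, ← Finset.sum_mul, ← Finset.sum_mul]; ring
      _ ≤ ((m:ℝ)+1+1) * r ^ (m+1) * ∑ i, |x i - y i| := by
          have hrm : (0:ℝ) ≤ r ^ m := pow_nonneg hr m
          have h1 : (∑ l, y l) ^ (m+1) ≤ r * r ^ m := by
            calc (∑ l, y l) ^ (m+1) ≤ r ^ (m+1) := pow_le_pow_left₀ hY hyr _
              _ = r * r ^ m := by ring
          have h2 : r ^ (m+1) = r * r ^ m := by ring
          rw [h2]
          have t1 := mul_le_mul_of_nonneg_right h1 hD
          have t2 : (∑ i, x i) * (((m:ℝ)+1) * r ^ m * ∑ l, |x l - y l|)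
              ≤ r * (((m:ℝ)+1) * r ^ m * ∑ l, |x l - y l|) :=
            mul_le_mul_of_nonneg_right hxr (by positivity)
          linarith
      _ = ((m+1:ℕ)+1 : ℝ) * r ^ (m+1) * ∑ i, |x i - y i| := by push_cast; ring

lemma bern_aux {a b β : ℝ} (ha : 1 ≤ a) (hab : a ≤ b) (hβ0 : 0 ≤ β) (hβ1 : β ≤ 1) :
    (a ^ (-β) - b ^ (-β)) * a ≤ β * (b - a) := by
  have ha0 : (0:ℝ) < a := lt_of_lt_of_le one_pos ha
  have hb0 : (0:ℝ) < b := lt_of_lt_of_le ha0 hab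
  set A := a ^ β with hA
  set B := b ^ β with hB
  have hA0 : 0 < A := rpow_pos_of_pos ha0 β
  have hB0 : 0 < B := rpow_pos_of_pos hb0 β
  have hB1 : 1 ≤ B := Real.one_le_rpow (ha.trans hab) hβ0
  have hbern : (b / a) ^ β ≤ 1 + β * (b / a - 1) := by
    have := _root_.rpow_one_add_le_one_add_mul_self (s := b / a - 1)
      (by nlinarith [(div_nonneg hb0.le ha0.le)]) hβ0 hβ1
    simpa using this
  have hBA : B ≤ A * (1 + β * (b / a - 1)) := by
    have : B = A * (b / a) ^ β := by
      rw [hA, hB, ← Real.mul_rpow ha0.le (div_nonneg hb0.le ha0.le),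
        mul_div_cancel₀ _ ha0.ne']
    rw [this]
    exact mul_le_mul_of_nonneg_left hbern hA0.le
  have hkey : (B - A) * a ≤ A * β * (b - a) := by
    have h' : B * a ≤ A * (1 + β * (b / a - 1)) * a := mul_le_mul_of_nonneg_right hBA ha0.le
    have he : A * (1 + β * (b / a - 1)) * a = A * a + A * β * (b - a) := by
      field_simp
    rw [he] at h'
    linarith
  have hinv : a ^ (-β) = A⁻¹ := by rw [Real.rpow_neg ha0.le]
  have hinvb : b ^ (-β) = B⁻¹ := by rw [Real.rpow_neg hb0.le]
  rw [hinv, hinvb]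
  have h1 : A⁻¹ - B⁻¹ = (B - A) / (A * B) := by field_simp
  rw [h1]
  rw [div_mul_eq_mul_div, div_le_iff₀ (mul_pos hA0 hB0)]
  calc (B - A) * a ≤ A * β * (b - a) := hkey
    _ ≤ β * (b - a) * (A * B) := by
        nlinarith [mul_nonneg (mul_nonneg (mul_nonneg hβ0 (sub_nonneg.2 hab)) hA0.le)
          (sub_nonneg.2 hB1)]

lemma Phi_key (n k : ℕ) (hk : 2 ≤ k)
    (P : Fin n → (Fin (k-1) → Fin n) → ℝ)
    (hP0 : ∀ i j, 0 ≤ P i j) (hPs : ∀ j, ∑ i, P i j ≤ 1)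
    (v : Fin n → ℝ) (hv0 : ∀ i, 0 ≤ v i) (hv1 : ∑ i, v i = 1)
    (α : ℝ) (hα0 : 0 ≤ α) (hα1 : α < 1)
    (x y : Fin n → ℝ) (hx : ∀ i, 0 ≤ x i) (hy : ∀ i, 0 ≤ y i)
    (hxΔ : ∑ i, x i ≤ (1 - α) ^ (-(1:ℝ)/((k:ℝ)-1)))
    (hyΔ : ∑ i, y i ≤ (1 - α) ^ (-(1:ℝ)/((k:ℝ)-1)))
    (hS : ∑ l, contr P x l ≤ ∑ l, contr P y l) :
    ∑ i, |Phi k P v α x i - Phi k P v α y i| ≤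
      ((2*(k:ℝ)-3) * α * (1 - α) ^ (-((k:ℝ)-2)/((k:ℝ)-1))) * ∑ i, |x i - y i| := by
  obtain ⟨K, rfl⟩ : ∃ K, k = K + 2 := ⟨k - 2, by omega⟩
  have h1α : (0:ℝ) < 1 - α := by linarith
  have hKc : ((K+2:ℕ):ℝ) = (K:ℝ) + 2 := by push_cast; ring
  have hK1 : (0:ℝ) < (K:ℝ) + 1 := by positivity
  set r : ℝ := (1 - α) ^ (-(1:ℝ)/(((K+2:ℕ):ℝ)-1)) with hr
  have hr0 : (0:ℝ) < r := rpow_pos_of_pos h1α _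
  have hexp : -(1:ℝ)/(((K+2:ℕ):ℝ)-1) = -(1/((K:ℝ)+1)) := by rw [hKc]; ring
  have hr1 : (1:ℝ) ≤ r := by
    rw [hr, hexp]
    exact Real.one_le_rpow_of_pos_of_le_one_of_nonpos h1α (by linarith)
      (by rw [neg_nonpos]; positivity)
  have hrpow : r ^ (K+1) = (1-α)⁻¹ := by
    rw [hr, hexp, ← Real.rpow_natCast ((1-α) ^ (-(1/((K:ℝ)+1)))) (K+1),
      ← Real.rpow_mul h1α.le]
    have : -(1/((K:ℝ)+1)) * ((K+1:ℕ):ℝ) = -1 := by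
      push_cast; field_simp
    rw [this, Real.rpow_neg_one]
  have h21 : ((K+2:ℕ):ℝ) - 1 = (K:ℝ)+1 := by push_cast; ring
  have h22 : ((K+2:ℕ):ℝ) - 2 = (K:ℝ) := by push_cast; ring
  have hrK : r ^ K = (1 - α) ^ (-(((K+2:ℕ):ℝ)-2)/(((K+2:ℕ):ℝ)-1)) := by
    rw [hr, hexp, ← Real.rpow_natCast ((1-α) ^ (-(1/((K:ℝ)+1)))) K,
      ← Real.rpow_mul h1α.le]
    congr 1
    rw [h21, h22]
    field_simp
  have hD0 : (0:ℝ) ≤ ∑ i, |x i - y i| := Finset.sum_nonneg fun i _ => abs_nonneg _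
  have hc0 : ∀ (z : Fin n → ℝ), (∀ i, 0 ≤ z i) → ∀ i, 0 ≤ contr P z i := by
    intro z hz i
    exact Finset.sum_nonneg fun j _ =>
      mul_nonneg (hP0 i j) (Finset.prod_nonneg fun s _ => hz _)
  have hdc : ∑ i, |contr P x i - contr P y i|
      ≤ ((K:ℝ)+1) * r ^ K * ∑ i, |x i - y i| := by
    have hstep1 : ∑ i, |contr P x i - contr P y i|
        ≤ ∑ j : Fin (K+2-1) → Fin n, |∏ s, x (j s) - ∏ s, y (j s)| := by
      calc ∑ i, |contr P x i - contr P y i|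
          ≤ ∑ i, ∑ j : Fin (K+2-1) → Fin n, P i j * |∏ s, x (j s) - ∏ s, y (j s)| := by
            refine Finset.sum_le_sum fun i _ => ?_
            simp only [contr, ← Finset.sum_sub_distrib]
            refine (Finset.abs_sum_le_sum_abs _ _).trans (le_of_eq ?_)
            refine Finset.sum_congr rfl fun j _ => ?_
            rw [← mul_sub, abs_mul, abs_of_nonneg (hP0 i j)]
        _ = ∑ j : Fin (K+2-1) → Fin n,
            (∑ i, P i j) * |∏ s, x (j s) - ∏ s, y (j s)| := by
            rw [Finset.sum_comm]
            exact Finset.sum_congr rfl fun j _ => (Finset.sum_mul _ _ _).symm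
        _ ≤ ∑ j : Fin (K+2-1) → Fin n, |∏ s, x (j s) - ∏ s, y (j s)| := by
            refine Finset.sum_le_sum fun j _ => ?_
            nlinarith [hPs j, abs_nonneg (∏ s, x (j s) - ∏ s, y (j s))]
    refine hstep1.trans ?_
    exact sum_abs_prod_sub K hr0.le x y hx hy hxΔ hyΔ
  set β := (((K+2:ℕ):ℝ)-2)/(((K+2:ℕ):ℝ)-1) with hβ
  have hβ0 : 0 ≤ β := by rw [hβ, h21, h22]; positivity
  have hβ1 : β ≤ 1 := by rw [hβ, h21, h22, div_le_one hK1]; linarith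
  have hexp2 : -(((K+2:ℕ):ℝ)-2)/(((K+2:ℕ):ℝ)-1) = -β := by rw [hβ]; ring
  simp only [Phi]
  rw [hexp2]
  set Sx := ∑ l, contr P x l with hSx
  set Sy := ∑ l, contr P y l with hSy
  have hSx0 : 0 ≤ Sx := Finset.sum_nonneg fun l _ => hc0 x hx l
  have hSy0 : 0 ≤ Sy := Finset.sum_nonneg fun l _ => hc0 y hy l
  set a := 1 + α * Sx with ha
  set b := 1 + α * Sy with hb
  have ha1 : 1 ≤ a := by nlinarith
  have hb1 : 1 ≤ b := by nlinarith
  have hab : a ≤ b := by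
    have : α * Sx ≤ α * Sy := mul_le_mul_of_nonneg_left hS hα0
    rw [ha, hb]; linarith
  have ha0 : (0:ℝ) < a := lt_of_lt_of_le one_pos ha1
  have hb0 : (0:ℝ) < b := lt_of_lt_of_le one_pos hb1
  have hba : b - a ≤ α * ∑ i, |contr P x i - contr P y i| := by
    have h1 : Sy - Sx ≤ ∑ i, |contr P x i - contr P y i| := by
      rw [hSx, hSy, ← Finset.sum_sub_distrib]
      refine (le_abs_self _).trans ?_
      refine (Finset.abs_sum_le_sum_abs _ _).trans (le_of_eq ?_)
      exact Finset.sum_congr rfl fun i _ => abs_sub_comm _ _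
    have e : b - a = α * (Sy - Sx) := by rw [ha, hb]; ring
    rw [e]
    exact mul_le_mul_of_nonneg_left h1 hα0
  set A := a ^ (-β) with hA
  set B := b ^ (-β) with hB
  have hA0 : (0:ℝ) < A := rpow_pos_of_pos ha0 _
  have hB0 : (0:ℝ) < B := rpow_pos_of_pos hb0 _
  have hBA : B ≤ A := Real.rpow_le_rpow_of_nonpos ha0 hab (neg_nonpos.2 hβ0)
  have hB1 : B ≤ 1 := Real.rpow_le_one_of_one_le_of_nonpos hb1 (neg_nonpos.2 hβ0)
  have hbern := bern_aux ha1 hab hβ0 hβ1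
  rw [← hA, ← hB] at hbern
  set d := ∑ i, |contr P x i - contr P y i| with hd
  have hd0 : 0 ≤ d := Finset.sum_nonneg fun i _ => abs_nonneg _
  have hpt : ∀ i, |A * (v i + α * contr P x i) - B * (v i + α * contr P y i)|
      ≤ B * (α * |contr P x i - contr P y i|) + (A - B) * (v i + α * contr P x i) := by
    intro i
    have hux : 0 ≤ v i + α * contr P x i :=
      add_nonneg (hv0 i) (mul_nonneg hα0 (hc0 x hx i))
    have e : A * (v i + α * contr P x i) - B * (v i + α * contr P y i)
        = B * (α * (contr P x i - contr P y i)) + (A - B) * (v i + α * contr P x i) := by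
      ring
    rw [e]
    refine (abs_add_le _ _).trans ?_
    rw [abs_mul, abs_mul, abs_of_nonneg hB0.le, abs_of_nonneg hα0,
      abs_mul, abs_of_nonneg (sub_nonneg.2 hBA), abs_of_nonneg hux]
  have e1 : ∑ i, (v i + α * contr P x i) = a := by
    rw [Finset.sum_add_distrib, hv1, ← Finset.mul_sum, ha, hSx]
  have hsum : ∑ i, |A * (v i + α * contr P x i) - B * (v i + α * contr P y i)|
      ≤ B * (α * d) + (A - B) * a := by
    calc ∑ i, |A * (v i + α * contr P x i) - B * (v i + α * contr P y i)|
        ≤ ∑ i, (B * (α * |contr P x i - contr P y i|)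
            + (A - B) * (v i + α * contr P x i)) := Finset.sum_le_sum fun i _ => hpt i
      _ = B * (α * d) + (A - B) * a := by
          rw [Finset.sum_add_distrib, ← Finset.mul_sum, ← Finset.mul_sum,
            ← Finset.mul_sum, e1, hd]
  have hβsum : (1+β)*((K:ℝ)+1) = 2*((K+2:ℕ):ℝ)-3 := by
    rw [hβ, h21, h22, hKc]
    field_simp
    ring
  calc ∑ i, |A * (v i + α * contr P x i) - B * (v i + α * contr P y i)|
      ≤ B * (α * d) + (A - B) * a := hsum
    _ ≤ (1 + β) * (α * d) := by
        have t1 : B * (α * d) ≤ 1 * (α * d) :=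
          mul_le_mul_of_nonneg_right hB1 (mul_nonneg hα0 hd0)
        have t2 : (A - B) * a ≤ β * (b - a) := hbern
        have t3 : β * (b - a) ≤ β * (α * d) := mul_le_mul_of_nonneg_left hba hβ0
        linarith
    _ ≤ (1 + β) * (α * (((K:ℝ)+1) * r ^ K * ∑ i, |x i - y i|)) := by
        refine mul_le_mul_of_nonneg_left (mul_le_mul_of_nonneg_left hdc hα0) ?_
        linarith
    _ = (2*((K+2:ℕ):ℝ)-3) * α * (1 - α) ^ (-β) * ∑ i, |x i - y i| := by
        have hrK2 : r ^ K = (1 - α) ^ (-β) := by rw [hrK, hexp2]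
        rw [← hrK2, ← hβsum]
        ring

theorem Phi_contraction (n k : ℕ) (hn : 0 < n) (hk : 2 ≤ k)
    (P : Fin n → (Fin (k-1) → Fin n) → ℝ)
    (hP0 : ∀ i j, 0 ≤ P i j) (hPs : ∀ j, ∑ i, P i j ≤ 1)
    (v : Fin n → ℝ) (hv0 : ∀ i, 0 ≤ v i) (hv1 : ∑ i, v i = 1)
    (α : ℝ) (hα0 : 0 ≤ α) (hα1 : α < 1)
    (hς : (2*(k:ℝ)-3) * α * (1 - α) ^ (-((k:ℝ)-2)/((k:ℝ)-1)) < 1)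
    (x y : Fin n → ℝ) (hx : ∀ i, 0 ≤ x i) (hy : ∀ i, 0 ≤ y i)
    (hxΔ : ∑ i, x i ≤ (1 - α) ^ (-(1:ℝ)/((k:ℝ)-1))) (hyΔ : ∑ i, y i ≤ (1 - α) ^ (-(1:ℝ)/((k:ℝ)-1))) :
    ∑ i, |Phi k P v α x i - Phi k P v α y i| ≤
      ((2*(k:ℝ)-3) * α * (1 - α) ^ (-((k:ℝ)-2)/((k:ℝ)-1))) * ∑ i, |x i - y i| := by
  rcases le_total (∑ l, contr P x l) (∑ l, contr P y l) with h | h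
  · exact Phi_key n k hk P hP0 hPs v hv0 hv1 α hα0 hα1 x y hx hy hxΔ hyΔ h
  · have := Phi_key n k hk P hP0 hPs v hv0 hv1 α hα0 hα1 y x hy hx hyΔ hxΔ h
    calc ∑ i, |Phi k P v α x i - Phi k P v α y i|
        = ∑ i, |Phi k P v α y i - Phi k P v α x i| :=
          Finset.sum_congr rfl fun i _ => abs_sub_comm _ _
      _ ≤ ((2*(k:ℝ)-3) * α * (1 - α) ^ (-((k:ℝ)-2)/((k:ℝ)-1))) * ∑ i, |y i - x i| := this
      _ = ((2*(k:ℝ)-3) * α * (1 - α) ^ (-((k:ℝ)-2)/((k:ℝ)-1))) * ∑ i, |x i - y i| := by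
          rw [Finset.sum_congr rfl fun i _ => abs_sub_comm (y i) (x i)]
end

section
/- If (2k−3) α (1−α)^{−(k−2)/(k−1)} < 1, then the MLPPR system (e^T y)^{k-2} y − α P̄ y^{k-1} = v has a unique nonnegative solution in Δ. -/
open Finset Real

namespace MLPPR

noncomputable def d1 {n : ℕ} (y z : Fin n → ℝ) : ℝ := ∑ i, |y i - z i|

lemma d1_nonneg {n : ℕ} (y z : Fin n → ℝ) : 0 ≤ d1 y z :=
  Finset.sum_nonneg fun _ _ => abs_nonneg _

lemma d1_comm {n : ℕ} (y z : Fin n → ℝ) : d1 y z = d1 z y := by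
  simp [d1, abs_sub_comm]

lemma abs_le_d1 {n : ℕ} (y z : Fin n → ℝ) (i : Fin n) : |y i - z i| ≤ d1 y z :=
  Finset.single_le_sum (f := fun i => |y i - z i|) (fun _ _ => abs_nonneg _) (Finset.mem_univ i)

lemma d1_eq_zero {n : ℕ} {y z : Fin n → ℝ} (h : d1 y z ≤ 0) : y = z := by
  funext i
  have h0 := abs_le_d1 y z i
  have h1 := abs_nonneg (y i - z i)
  have h2 : |y i - z i| = 0 := le_antisymm (h0.trans h) h1
  have := abs_eq_zero.mp h2
  linarith

lemma d1_triangle {n : ℕ} (x y z : Fin n → ℝ) : d1 x z ≤ d1 x y + d1 y z := by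
  unfold d1
  rw [← Finset.sum_add_distrib]
  exact Finset.sum_le_sum fun i _ => abs_sub_le _ _ _

lemma sum_prod_eq {n : ℕ} (m : ℕ) (y : Fin n → ℝ) :
    ∑ j : Fin m → Fin n, ∏ s, y (j s) = (∑ i, y i) ^ m := by
  calc ∑ j : Fin m → Fin n, ∏ s, y (j s)
      = ∑ j ∈ Fintype.piFinset (fun _ : Fin m => (univ : Finset (Fin n))), ∏ s, y (j s) := by
        rw [Fintype.piFinset_univ]
    _ = ∏ _s : Fin m, ∑ i, y i := (Finset.prod_univ_sum _ _).symm
    _ = (∑ i, y i) ^ m := by simp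

lemma sum_pi_split {n m : ℕ} (F : (Fin (m+1) → Fin n) → ℝ) :
    ∑ j, F j = ∑ i : Fin n, ∑ j' : Fin m → Fin n, F (Fin.cons i j') := by
  calc ∑ j, F j = ∑ p : Fin n × (Fin m → Fin n), F (Fin.cons p.1 p.2) :=
        (Fintype.sum_equiv (Fin.consEquiv _) (fun p : Fin n × (Fin m → Fin n) => F (Fin.cons p.1 p.2)) F
          (fun p => rfl)).symm
    _ = ∑ i : Fin n, ∑ j' : Fin m → Fin n, F (Fin.cons i j') := Fintype.sum_prod_type _

lemma prod_cons_apply {n m : ℕ} (y : Fin n → ℝ) (i : Fin n) (j' : Fin m → Fin n) :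
    ∏ s, y ((Fin.cons i j' : Fin (m+1) → Fin n) s) = y i * ∏ s, y (j' s) := by
  rw [Fin.prod_univ_succ]
  simp

lemma sum_abs_prod_sub {n : ℕ} (M : ℝ) (hM : 0 ≤ M) :
    ∀ (m : ℕ) (y z : Fin n → ℝ), (∀ i, 0 ≤ y i) → (∀ i, 0 ≤ z i) →
    (∑ i, y i) ≤ M → (∑ i, z i) ≤ M →
    ∑ j : Fin m → Fin n, |(∏ s, y (j s)) - ∏ s, z (j s)| ≤ m * M ^ (m-1) * d1 y z
  | 0, y, z, _, _, _, _ => by simp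
  | (m+1), y, z, hy, hz, hys, hzs => by
    have hd : 0 ≤ d1 y z := d1_nonneg y z
    have IH := sum_abs_prod_sub M hM m y z hy hz hys hzs
    have hzp : ∀ j' : Fin m → Fin n, (0:ℝ) ≤ ∏ s, z (j' s) :=
      fun j' => Finset.prod_nonneg fun s _ => hz _
    have step : ∑ j : Fin (m+1) → Fin n, |(∏ s, y (j s)) - ∏ s, z (j s)|
        ≤ (∑ i, |y i - z i|) * (∑ j' : Fin m → Fin n, ∏ s, z (j' s))
          + (∑ i, y i) * ∑ j' : Fin m → Fin n, |(∏ s, y (j' s)) - ∏ s, z (j' s)| := by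
      rw [sum_pi_split, Finset.sum_mul, Finset.sum_mul, ← Finset.sum_add_distrib]
      apply Finset.sum_le_sum
      intro i _
      rw [Finset.mul_sum, Finset.mul_sum, ← Finset.sum_add_distrib]
      apply Finset.sum_le_sum
      intro j' _
      rw [prod_cons_apply, prod_cons_apply]
      have hid : y i * (∏ s, y (j' s)) - z i * ∏ s, z (j' s)
          = (y i - z i) * (∏ s, z (j' s)) + y i * ((∏ s, y (j' s)) - ∏ s, z (j' s)) := by
        ring
      rw [hid]
      refine (abs_add_le _ _).trans ?_
      rw [abs_mul, abs_mul, abs_of_nonneg (hzp j'), abs_of_nonneg (hy i)]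
    refine step.trans ?_
    rw [sum_prod_eq]
    have hzm : (∑ i, z i) ^ m ≤ M ^ m :=
      pow_le_pow_left₀ (Finset.sum_nonneg fun i _ => hz i) hzs m
    have h1 : (∑ i, |y i - z i|) * (∑ i, z i) ^ m ≤ d1 y z * M ^ m := by
      unfold d1
      exact mul_le_mul_of_nonneg_left hzm (Finset.sum_nonneg fun _ _ => abs_nonneg _)
    have hSnn : 0 ≤ ∑ j' : Fin m → Fin n, |(∏ s, y (j' s)) - ∏ s, z (j' s)| :=
      Finset.sum_nonneg fun _ _ => abs_nonneg _
    have h2 : (∑ i, y i) * ∑ j' : Fin m → Fin n, |(∏ s, y (j' s)) - ∏ s, z (j' s)|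
        ≤ M * ((m:ℝ) * M ^ (m-1) * d1 y z) :=
      (mul_le_mul_of_nonneg_right hys hSnn).trans (mul_le_mul_of_nonneg_left IH hM)
    have h3 : M * ((m:ℝ) * M ^ (m-1) * d1 y z) ≤ (m:ℝ) * M ^ m * d1 y z := by
      cases m with
      | zero => simp
      | succ m' =>
        refine le_of_eq ?_
        simp only [Nat.add_sub_cancel]
        rw [pow_succ]
        ring
    have hfin : ((m:ℝ)+1) * M ^ m * d1 y z = d1 y z * M ^ m + (m:ℝ) * M ^ m * d1 y z := by ring
    push_cast
    rw [hfin]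
    unfold d1 at h1 h2 h3 ⊢
    linarith



lemma rpow_diff_le {β a b : ℝ} (hβ : 0 ≤ β) (ha : 1 ≤ a) (hab : a ≤ b) :
    (a ^ (-β) - b ^ (-β)) * a ≤ β * (b - a) := by
  have ha0 : (0:ℝ) < a := lt_of_lt_of_le one_pos ha
  have hb0 : (0:ℝ) < b := lt_of_lt_of_le ha0 hab
  have hlb : Real.log a ≤ Real.log b := Real.log_le_log ha0 hab
  have hlog : Real.log b - Real.log a ≤ (b - a)/a := by
    have h := Real.log_le_sub_one_of_pos (show (0:ℝ) < b/a by positivity)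
    rw [Real.log_div (ne_of_gt hb0) (ne_of_gt ha0)] at h
    have : b/a - 1 = (b-a)/a := by
      rw [sub_div, div_self (ne_of_gt ha0)]
    linarith
  have hexp1 : a ^ (-β) ≤ 1 :=
    Real.rpow_le_one_of_one_le_of_nonpos ha (neg_nonpos.mpr hβ)
  have key1 : a ^ (-β) - b ^ (-β) ≤ a ^ (-β) * (β * (Real.log b - Real.log a)) := by
    rw [Real.rpow_def_of_pos ha0, Real.rpow_def_of_pos hb0]
    have h2 : Real.log b * -β = Real.log a * -β + (-(β * (Real.log b - Real.log a))) := by ring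
    rw [h2, Real.exp_add]
    have h3 : 1 - Real.exp (-(β * (Real.log b - Real.log a))) ≤ β * (Real.log b - Real.log a) := by
      linarith [Real.add_one_le_exp (-(β * (Real.log b - Real.log a)))]
    nlinarith [Real.exp_pos (Real.log a * -β)]
  have hnn : 0 ≤ β * (Real.log b - Real.log a) := mul_nonneg hβ (by linarith)
  calc (a ^ (-β) - b ^ (-β)) * a
      ≤ (a ^ (-β) * (β * (Real.log b - Real.log a))) * a :=
        mul_le_mul_of_nonneg_right key1 (le_of_lt ha0)
    _ ≤ (1 * (β * ((b - a)/a))) * a := by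
        apply mul_le_mul_of_nonneg_right _ (le_of_lt ha0)
        exact mul_le_mul hexp1 (mul_le_mul_of_nonneg_left hlog hβ) hnn zero_le_one
    _ = β * (b - a) := by field_simp

lemma contr_nonneg {n m : ℕ} {P : Fin n → (Fin m → Fin n) → ℝ} (hP0 : ∀ i j, 0 ≤ P i j)
    {y : Fin n → ℝ} (hy : ∀ i, 0 ≤ y i) (i : Fin n) : 0 ≤ contr P y i :=
  Finset.sum_nonneg fun j _ => mul_nonneg (hP0 i j) (Finset.prod_nonneg fun s _ => hy _)

lemma sum_contr_le {n m : ℕ} {P : Fin n → (Fin m → Fin n) → ℝ} (hP0 : ∀ i j, 0 ≤ P i j)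
    (hPs : ∀ j, ∑ i, P i j ≤ 1) {y : Fin n → ℝ} (hy : ∀ i, 0 ≤ y i) :
    ∑ i, contr P y i ≤ (∑ i, y i) ^ m := by
  unfold contr
  rw [Finset.sum_comm]
  calc ∑ j : Fin m → Fin n, ∑ i, P i j * ∏ s, y (j s)
      = ∑ j : Fin m → Fin n, (∑ i, P i j) * ∏ s, y (j s) := by
        simp [Finset.sum_mul]
    _ ≤ ∑ j : Fin m → Fin n, ∏ s, y (j s) := by
        apply Finset.sum_le_sum
        intro j _
        have hp : (0:ℝ) ≤ ∏ s, y (j s) := Finset.prod_nonneg fun s _ => hy _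
        nlinarith [hPs j]
    _ = (∑ i, y i) ^ m := sum_prod_eq m y

lemma d1_contr_le {n m : ℕ} {P : Fin n → (Fin m → Fin n) → ℝ} (hP0 : ∀ i j, 0 ≤ P i j)
    (hPs : ∀ j, ∑ i, P i j ≤ 1) (M : ℝ) (hM : 0 ≤ M) {y z : Fin n → ℝ}
    (hy : ∀ i, 0 ≤ y i) (hz : ∀ i, 0 ≤ z i) (hys : ∑ i, y i ≤ M) (hzs : ∑ i, z i ≤ M) :
    d1 (contr P y) (contr P z) ≤ m * M ^ (m-1) * d1 y z := by
  have h1 : d1 (contr P y) (contr P z)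
      ≤ ∑ j : Fin m → Fin n, |(∏ s, y (j s)) - ∏ s, z (j s)| := by
    unfold d1 contr
    calc ∑ i, |(∑ j : Fin m → Fin n, P i j * ∏ s, y (j s))
            - ∑ j : Fin m → Fin n, P i j * ∏ s, z (j s)|
        ≤ ∑ i, ∑ j : Fin m → Fin n, P i j * |(∏ s, y (j s)) - ∏ s, z (j s)| := by
          apply Finset.sum_le_sum
          intro i _
          rw [← Finset.sum_sub_distrib]
          refine (Finset.abs_sum_le_sum_abs _ _).trans ?_
          apply Finset.sum_le_sum
          intro j _
          rw [← mul_sub, abs_mul, abs_of_nonneg (hP0 i j)]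
      _ = ∑ j : Fin m → Fin n, (∑ i, P i j) * |(∏ s, y (j s)) - ∏ s, z (j s)| := by
          rw [Finset.sum_comm]
          simp [Finset.sum_mul]
      _ ≤ ∑ j : Fin m → Fin n, |(∏ s, y (j s)) - ∏ s, z (j s)| := by
          apply Finset.sum_le_sum
          intro j _
          nlinarith [hPs j, abs_nonneg ((∏ s, y (j s)) - ∏ s, z (j s))]
  exact h1.trans (sum_abs_prod_sub M hM m y z hy hz hys hzs)


noncomputable def gg {n m : ℕ} (P : Fin n → (Fin (m+1) → Fin n) → ℝ) (v : Fin n → ℝ)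
    (α : ℝ) (y : Fin n → ℝ) : Fin n → ℝ := fun i => α * contr P y i + v i

noncomputable def sg {n m : ℕ} (P : Fin n → (Fin (m+1) → Fin n) → ℝ) (v : Fin n → ℝ)
    (α : ℝ) (y : Fin n → ℝ) : ℝ := ∑ i, gg P v α y i

noncomputable def Phi {n m : ℕ} (P : Fin n → (Fin (m+1) → Fin n) → ℝ) (v : Fin n → ℝ)
    (α : ℝ) (y : Fin n → ℝ) : Fin n → ℝ :=
  fun i => sg P v α y ^ (-((m:ℝ)/((m:ℝ)+1))) * gg P v α y i

section Main

variable {n m : ℕ} {P : Fin n → (Fin (m+1) → Fin n) → ℝ} {v : Fin n → ℝ} {α : ℝ}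

lemma Mpos (hα1 : α < 1) : 0 < (1 - α) ^ (-(1:ℝ)/((m:ℝ)+1)) :=
  Real.rpow_pos_of_pos (by linarith) _

lemma Mone (hα0 : 0 ≤ α) (hα1 : α < 1) : 1 ≤ (1 - α) ^ (-(1:ℝ)/((m:ℝ)+1)) := by
  apply Real.one_le_rpow_of_pos_of_le_one_of_nonpos (by linarith) (by linarith)
  have : (0:ℝ) < (m:ℝ)+1 := by positivity
  rw [div_nonpos_iff]
  right; constructor <;> linarith

lemma Mpow (hα1 : α < 1) :
    ((1 - α) ^ (-(1:ℝ)/((m:ℝ)+1))) ^ (m+1) = (1 - α)⁻¹ := by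
  have h1 : (0:ℝ) < 1 - α := by linarith
  rw [← Real.rpow_natCast ((1 - α) ^ (-(1:ℝ)/((m:ℝ)+1))) (m+1), ← Real.rpow_mul h1.le]
  have hm : ((m:ℝ)+1) ≠ 0 := by positivity
  have : (-(1:ℝ)/((m:ℝ)+1)) * ((m+1 : ℕ):ℝ) = -1 := by
    push_cast
    field_simp
  rw [this, Real.rpow_neg_one]

lemma Mpow_m (hα1 : α < 1) :
    ((1 - α) ^ (-(1:ℝ)/((m:ℝ)+1))) ^ (m : ℕ) = (1 - α) ^ (-(m:ℝ)/((m:ℝ)+1)) := by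
  have h1 : (0:ℝ) < 1 - α := by linarith
  rw [← Real.rpow_natCast ((1 - α) ^ (-(1:ℝ)/((m:ℝ)+1))) m, ← Real.rpow_mul h1.le]
  congr 1
  have hm : ((m:ℝ)+1) ≠ 0 := by positivity
  field_simp

lemma gg_nonneg (hP0 : ∀ i j, 0 ≤ P i j) (hv0 : ∀ i, 0 ≤ v i) (hα0 : 0 ≤ α)
    {y : Fin n → ℝ} (hy : ∀ i, 0 ≤ y i) (i : Fin n) : 0 ≤ gg P v α y i :=
  add_nonneg (mul_nonneg hα0 (contr_nonneg hP0 hy i)) (hv0 i)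

lemma sg_eq {y : Fin n → ℝ} : sg P v α y = α * (∑ i, contr P y i) + ∑ i, v i := by
  unfold sg gg
  rw [Finset.sum_add_distrib, ← Finset.mul_sum]

lemma sg_ge_one (hP0 : ∀ i j, 0 ≤ P i j) (hv1 : ∑ i, v i = 1) (hα0 : 0 ≤ α)
    {y : Fin n → ℝ} (hy : ∀ i, 0 ≤ y i) : 1 ≤ sg P v α y := by
  rw [sg_eq, hv1]
  have : 0 ≤ ∑ i, contr P y i := Finset.sum_nonneg fun i _ => contr_nonneg hP0 hy i
  nlinarith

lemma sg_le (hP0 : ∀ i j, 0 ≤ P i j) (hPs : ∀ j, ∑ i, P i j ≤ 1) (hv1 : ∑ i, v i = 1)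
    (hα0 : 0 ≤ α) (hα1 : α < 1) {y : Fin n → ℝ} (hy : ∀ i, 0 ≤ y i)
    (hys : ∑ i, y i ≤ (1 - α) ^ (-(1:ℝ)/((m:ℝ)+1))) : sg P v α y ≤ (1 - α)⁻¹ := by
  have h1 : (0:ℝ) < 1 - α := by linarith
  rw [sg_eq, hv1]
  have hC : ∑ i, contr P y i ≤ (∑ i, y i) ^ (m+1) := sum_contr_le hP0 hPs hy
  have hsnn : 0 ≤ ∑ i, y i := Finset.sum_nonneg fun i _ => hy i
  have h2 : (∑ i, y i) ^ (m+1) ≤ ((1 - α) ^ (-(1:ℝ)/((m:ℝ)+1))) ^ (m+1) :=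
    pow_le_pow_left₀ hsnn hys (m+1)
  rw [Mpow hα1] at h2
  have h3 : ∑ i, contr P y i ≤ (1-α)⁻¹ := hC.trans h2
  have h4 : α * (1-α)⁻¹ + 1 = (1-α)⁻¹ := by field_simp; ring
  nlinarith

lemma sum_Phi (hP0 : ∀ i j, 0 ≤ P i j) (hv1 : ∑ i, v i = 1) (hα0 : 0 ≤ α)
    {y : Fin n → ℝ} (hy : ∀ i, 0 ≤ y i) :
    ∑ i, Phi P v α y i = sg P v α y ^ ((1:ℝ)/((m:ℝ)+1)) := by
  have hσ1 : 1 ≤ sg P v α y := sg_ge_one hP0 hv1 hα0 hy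
  have hσ0 : 0 < sg P v α y := by linarith
  unfold Phi
  rw [← Finset.mul_sum]
  have : (∑ i, gg P v α y i) = sg P v α y := rfl
  rw [this]
  nth_rewrite 2 [← Real.rpow_one (sg P v α y)]
  rw [← Real.rpow_add hσ0]
  congr 1
  have hm : ((m:ℝ)+1) ≠ 0 := by positivity
  field_simp
  ring

lemma sum_Phi_le (hP0 : ∀ i j, 0 ≤ P i j) (hPs : ∀ j, ∑ i, P i j ≤ 1)
    (hv1 : ∑ i, v i = 1) (hα0 : 0 ≤ α) (hα1 : α < 1) {y : Fin n → ℝ} (hy : ∀ i, 0 ≤ y i)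
    (hys : ∑ i, y i ≤ (1 - α) ^ (-(1:ℝ)/((m:ℝ)+1))) :
    ∑ i, Phi P v α y i ≤ (1 - α) ^ (-(1:ℝ)/((m:ℝ)+1)) := by
  have h1 : (0:ℝ) < 1 - α := by linarith
  rw [sum_Phi hP0 hv1 hα0 hy]
  have hσ1 : 1 ≤ sg P v α y := sg_ge_one hP0 hv1 hα0 hy
  have h2 : sg P v α y ^ ((1:ℝ)/((m:ℝ)+1)) ≤ ((1-α)⁻¹) ^ ((1:ℝ)/((m:ℝ)+1)) :=
    Real.rpow_le_rpow (by linarith) (sg_le hP0 hPs hv1 hα0 hα1 hy hys) (by positivity)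
  refine h2.trans (le_of_eq ?_)
  rw [← Real.rpow_neg_one (1-α), ← Real.rpow_mul h1.le]
  congr 1
  ring

lemma Phi_nonneg (hP0 : ∀ i j, 0 ≤ P i j) (hv0 : ∀ i, 0 ≤ v i) (hv1 : ∑ i, v i = 1)
    (hα0 : 0 ≤ α) {y : Fin n → ℝ} (hy : ∀ i, 0 ≤ y i) (i : Fin n) : 0 ≤ Phi P v α y i := by
  have hσ1 : 1 ≤ sg P v α y := sg_ge_one hP0 hv1 hα0 hy
  exact mul_nonneg (Real.rpow_nonneg (by linarith) _) (gg_nonneg hP0 hv0 hα0 hy i)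

lemma gg_lip (hP0 : ∀ i j, 0 ≤ P i j) (hPs : ∀ j, ∑ i, P i j ≤ 1) (hα0 : 0 ≤ α)
    (hα1 : α < 1) {y z : Fin n → ℝ} (hy : ∀ i, 0 ≤ y i) (hz : ∀ i, 0 ≤ z i)
    (hys : ∑ i, y i ≤ (1 - α) ^ (-(1:ℝ)/((m:ℝ)+1)))
    (hzs : ∑ i, z i ≤ (1 - α) ^ (-(1:ℝ)/((m:ℝ)+1))) :
    d1 (gg P v α y) (gg P v α z)
      ≤ α * (((m:ℝ)+1) * ((1 - α) ^ (-(1:ℝ)/((m:ℝ)+1))) ^ (m:ℕ)) * d1 y z := by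
  set M := (1 - α) ^ (-(1:ℝ)/((m:ℝ)+1)) with hM
  have hM0 : 0 ≤ M := (Mpos hα1).le
  have h1 : d1 (gg P v α y) (gg P v α z) = α * d1 (contr P y) (contr P z) := by
    unfold d1 gg
    rw [Finset.mul_sum]
    apply Finset.sum_congr rfl
    intro i _
    rw [show α * contr P y i + v i - (α * contr P z i + v i)
        = α * (contr P y i - contr P z i) by ring, abs_mul, abs_of_nonneg hα0]
  rw [h1]
  have h2 : d1 (contr P y) (contr P z) ≤ ((m:ℝ)+1) * M ^ (m:ℕ) * d1 y z := by
    have := d1_contr_le hP0 hPs M hM0 hy hz hys hzs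
    push_cast at this
    simpa using this
  calc α * d1 (contr P y) (contr P z) ≤ α * (((m:ℝ)+1) * M ^ (m:ℕ) * d1 y z) :=
        mul_le_mul_of_nonneg_left h2 hα0
    _ = α * (((m:ℝ)+1) * M ^ (m:ℕ)) * d1 y z := by ring

lemma phi_lip_aux (hP0 : ∀ i j, 0 ≤ P i j) (hv0 : ∀ i, 0 ≤ v i) (hv1 : ∑ i, v i = 1)
    (hα0 : 0 ≤ α) {y z : Fin n → ℝ} (hy : ∀ i, 0 ≤ y i) (hz : ∀ i, 0 ≤ z i)
    (hab : sg P v α y ≤ sg P v α z) :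
    d1 (Phi P v α y) (Phi P v α z)
      ≤ (1 + (m:ℝ)/((m:ℝ)+1)) * d1 (gg P v α y) (gg P v α z) := by
  set β : ℝ := (m:ℝ)/((m:ℝ)+1) with hβdef
  have hβ0 : 0 ≤ β := by positivity
  set a := sg P v α y with hadef
  set b := sg P v α z with hbdef
  have ha1 : 1 ≤ a := sg_ge_one hP0 hv1 hα0 hy
  have hb1 : 1 ≤ b := sg_ge_one hP0 hv1 hα0 hz
  have ha0 : (0:ℝ) < a := by linarith
  have hb0 : (0:ℝ) < b := by linarith
  set D := d1 (gg P v α y) (gg P v α z) with hDdef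
  have hrle : b ^ (-β) ≤ a ^ (-β) :=
    Real.rpow_le_rpow_of_nonpos ha0 hab (neg_nonpos.mpr hβ0)
  have hbr1 : b ^ (-β) ≤ 1 :=
    Real.rpow_le_one_of_one_le_of_nonpos hb1 (neg_nonpos.mpr hβ0)
  have hbr0 : 0 ≤ b ^ (-β) := Real.rpow_nonneg hb0.le _
  -- coordinatewise bound
  have hco : ∀ i, |Phi P v α y i - Phi P v α z i|
      ≤ b ^ (-β) * |gg P v α y i - gg P v α z i| + (a ^ (-β) - b ^ (-β)) * gg P v α y i := by
    intro i
    unfold Phi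
    rw [← hadef, ← hbdef]
    have hsplit : a ^ (-β) * gg P v α y i - b ^ (-β) * gg P v α z i
        = b ^ (-β) * (gg P v α y i - gg P v α z i)
          + (a ^ (-β) - b ^ (-β)) * gg P v α y i := by ring
    rw [hsplit]
    refine (abs_add_le _ _).trans ?_
    rw [abs_mul, abs_mul, abs_of_nonneg hbr0,
      abs_of_nonneg (sub_nonneg.mpr hrle), abs_of_nonneg (gg_nonneg hP0 hv0 hα0 hy i)]
  have hsum : d1 (Phi P v α y) (Phi P v α z)
      ≤ b ^ (-β) * D + (a ^ (-β) - b ^ (-β)) * a := by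
    unfold d1
    calc ∑ i, |Phi P v α y i - Phi P v α z i|
        ≤ ∑ i, (b ^ (-β) * |gg P v α y i - gg P v α z i|
            + (a ^ (-β) - b ^ (-β)) * gg P v α y i) :=
          Finset.sum_le_sum fun i _ => hco i
      _ = b ^ (-β) * D + (a ^ (-β) - b ^ (-β)) * a := by
          rw [Finset.sum_add_distrib, ← Finset.mul_sum, ← Finset.mul_sum]
          rfl
  have hDnn : 0 ≤ D := d1_nonneg _ _
  have hba : b - a ≤ D := by
    have : b - a = ∑ i, (gg P v α z i - gg P v α y i) := by
      rw [Finset.sum_sub_distrib]; rfl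
    rw [this, hDdef]
    unfold d1
    apply Finset.sum_le_sum
    intro i _
    rw [abs_sub_comm]
    exact le_abs_self _
  have hkey : (a ^ (-β) - b ^ (-β)) * a ≤ β * D := by
    refine (rpow_diff_le hβ0 ha1 hab).trans ?_
    exact mul_le_mul_of_nonneg_left hba hβ0
  have h1 : b ^ (-β) * D ≤ D := by nlinarith
  linarith
 
lemma phi_lip (hP0 : ∀ i j, 0 ≤ P i j) (hv0 : ∀ i, 0 ≤ v i) (hv1 : ∑ i, v i = 1)
    (hα0 : 0 ≤ α) {y z : Fin n → ℝ} (hy : ∀ i, 0 ≤ y i) (hz : ∀ i, 0 ≤ z i) :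
    d1 (Phi P v α y) (Phi P v α z)
      ≤ (1 + (m:ℝ)/((m:ℝ)+1)) * d1 (gg P v α y) (gg P v α z) := by
  rcases le_total (sg P v α y) (sg P v α z) with h | h
  · exact phi_lip_aux hP0 hv0 hv1 hα0 hy hz h
  · rw [d1_comm (Phi P v α y), d1_comm (gg P v α y)]
    exact phi_lip_aux hP0 hv0 hv1 hα0 hz hy h

lemma phi_contraction (hP0 : ∀ i j, 0 ≤ P i j) (hPs : ∀ j, ∑ i, P i j ≤ 1)
    (hv0 : ∀ i, 0 ≤ v i) (hv1 : ∑ i, v i = 1) (hα0 : 0 ≤ α) (hα1 : α < 1)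
    {y z : Fin n → ℝ} (hy : ∀ i, 0 ≤ y i) (hz : ∀ i, 0 ≤ z i)
    (hys : ∑ i, y i ≤ (1 - α) ^ (-(1:ℝ)/((m:ℝ)+1)))
    (hzs : ∑ i, z i ≤ (1 - α) ^ (-(1:ℝ)/((m:ℝ)+1))) :
    d1 (Phi P v α y) (Phi P v α z)
      ≤ ((2*(m:ℝ)+1) * α * ((1 - α) ^ (-(1:ℝ)/((m:ℝ)+1))) ^ (m:ℕ)) * d1 y z := by
  have h1 := phi_lip (m := m) hP0 hv0 hv1 hα0 hy hz
  have h2 := gg_lip (v := v) hP0 hPs hα0 hα1 hy hz hys hzs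
  have hβnn : (0:ℝ) ≤ 1 + (m:ℝ)/((m:ℝ)+1) := by positivity
  refine h1.trans ?_
  refine (mul_le_mul_of_nonneg_left h2 hβnn).trans (le_of_eq ?_)
  have hm : ((m:ℝ)+1) ≠ 0 := by positivity
  field_simp
  ring

lemma fix_to_sol (hP0 : ∀ i j, 0 ≤ P i j) (hv1 : ∑ i, v i = 1) (hα0 : 0 ≤ α)
    {y : Fin n → ℝ} (hy : ∀ i, 0 ≤ y i) (hfix : Phi P v α y = y) (i : Fin n) :
    (∑ l, y l) ^ (m:ℕ) * y i - α * contr P y i = v i := by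
  set β : ℝ := (m:ℝ)/((m:ℝ)+1) with hβdef
  set σ := sg P v α y with hσdef
  have hσ1 : 1 ≤ σ := sg_ge_one hP0 hv1 hα0 hy
  have hσ0 : (0:ℝ) < σ := by linarith
  have hsum : ∑ l, y l = σ ^ ((1:ℝ)/((m:ℝ)+1)) := by
    conv_lhs => rw [← hfix]
    exact sum_Phi hP0 hv1 hα0 hy
  have hsm : (∑ l, y l) ^ (m:ℕ) = σ ^ β := by
    rw [hsum, ← Real.rpow_natCast (σ ^ ((1:ℝ)/((m:ℝ)+1))) m, ← Real.rpow_mul hσ0.le]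
    congr 1
    rw [hβdef]
    ring
  have hyi : y i = σ ^ (-β) * gg P v α y i := by
    conv_lhs => rw [← hfix]
    rfl
  rw [hsm, hyi, ← mul_assoc, ← Real.rpow_add hσ0]
  simp only [add_neg_cancel, Real.rpow_zero, one_mul]
  unfold gg
  ring

lemma sol_to_fix (hP0 : ∀ i j, 0 ≤ P i j) (hv1 : ∑ i, v i = 1) (hα0 : 0 ≤ α)
    {y : Fin n → ℝ} (hy : ∀ i, 0 ≤ y i)
    (hsol : ∀ i, (∑ l, y l) ^ (m:ℕ) * y i - α * contr P y i = v i) :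
    Phi P v α y = y := by
  set β : ℝ := (m:ℝ)/((m:ℝ)+1) with hβdef
  set σ := sg P v α y with hσdef
  set s := ∑ l, y l with hsdef
  have hσ1 : 1 ≤ σ := sg_ge_one hP0 hv1 hα0 hy
  have hσ0 : (0:ℝ) < σ := by linarith
  have hgg : ∀ i, gg P v α y i = s ^ (m:ℕ) * y i := by
    intro i
    unfold gg
    rw [← hsol i]
    ring
  have hσs : σ = s ^ (m+1 : ℕ) := by
    rw [hσdef]
    unfold sg
    rw [Finset.sum_congr rfl (fun i _ => hgg i), ← Finset.mul_sum, ← hsdef, pow_succ]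
  have hs0 : (0:ℝ) < s := by
    rcases lt_or_eq_of_le (Finset.sum_nonneg fun i _ => hy i : (0:ℝ) ≤ s) with h | h
    · exact h
    · exfalso
      have hs : s = 0 := hsdef.trans h.symm
      rw [hσs, hs, zero_pow (Nat.succ_ne_zero m)] at hσ1
      linarith
  have hkey : σ ^ (-β) * s ^ (m:ℕ) = 1 := by
    rw [hσs, ← Real.rpow_natCast s (m+1), ← Real.rpow_mul hs0.le,
      ← Real.rpow_natCast s m, ← Real.rpow_add hs0]
    rw [show ((m+1:ℕ):ℝ) * (-β) + (m:ℕ) = 0 by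
      push_cast [hβdef]
      have hm : ((m:ℝ)+1) ≠ 0 := by positivity
      field_simp
      ring]
    exact Real.rpow_zero s
  funext i
  unfold Phi
  rw [← hσdef, ← hβdef, hgg i, ← mul_assoc, hkey, one_mul]


lemma exists_fixed (hP0 : ∀ i j, 0 ≤ P i j) (hPs : ∀ j, ∑ i, P i j ≤ 1)
    (hv0 : ∀ i, 0 ≤ v i) (hv1 : ∑ i, v i = 1) (hα0 : 0 ≤ α) (hα1 : α < 1)
    (hc : (2*(m:ℝ)+1) * α * ((1 - α) ^ (-(1:ℝ)/((m:ℝ)+1))) ^ (m:ℕ) < 1) :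
    ∃ y : Fin n → ℝ, (∀ i, 0 ≤ y i) ∧ (∑ i, y i ≤ (1 - α) ^ (-(1:ℝ)/((m:ℝ)+1))) ∧
      Phi P v α y = y := by
  set M := (1 - α) ^ (-(1:ℝ)/((m:ℝ)+1)) with hMdef
  set c := (2*(m:ℝ)+1) * α * M ^ (m:ℕ) with hcdef
  have hM0 : (0:ℝ) ≤ M := (Mpos hα1).le
  have hc0 : (0:ℝ) ≤ c := by
    apply mul_nonneg (mul_nonneg (by positivity) hα0) (pow_nonneg hM0 m)
  set u : ℕ → Fin n → ℝ := fun j => (Phi P v α)^[j] v with hudef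
  have hu0 : u 0 = v := rfl
  have husucc : ∀ j, u (j+1) = Phi P v α (u j) := fun j => Function.iterate_succ_apply' _ _ _
  have hInD : ∀ j, (∀ i, 0 ≤ u j i) ∧ ∑ i, u j i ≤ M := by
    intro j
    induction j with
    | zero => exact ⟨hv0, by rw [hu0, hv1]; exact Mone hα0 hα1⟩
    | succ j ih =>
      rw [husucc]
      exact ⟨Phi_nonneg hP0 hv0 hv1 hα0 ih.1, sum_Phi_le hP0 hPs hv1 hα0 hα1 ih.1 ih.2⟩
  have hstep : ∀ j, d1 (u (j+1)) (u (j+2)) ≤ c * d1 (u j) (u (j+1)) := by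
    intro j
    have h := phi_contraction hP0 hPs hv0 hv1 hα0 hα1 (hInD j).1 (hInD (j+1)).1
      (hInD j).2 (hInD (j+1)).2
    rw [← husucc j, ← husucc (j+1)] at h
    exact h
  have hgeo : ∀ j, d1 (u j) (u (j+1)) ≤ d1 (u 0) (u 1) * c ^ j := by
    intro j
    induction j with
    | zero => simp
    | succ j ih =>
      calc d1 (u (j+1)) (u (j+2)) ≤ c * d1 (u j) (u (j+1)) := hstep j
        _ ≤ c * (d1 (u 0) (u 1) * c ^ j) := mul_le_mul_of_nonneg_left ih hc0
        _ = d1 (u 0) (u 1) * c ^ (j+1) := by ring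
  have hcauchy : CauchySeq u := by
    apply cauchySeq_of_le_geometric c (d1 (u 0) (u 1)) hc
    intro j
    rw [dist_pi_le_iff (mul_nonneg (d1_nonneg _ _) (pow_nonneg hc0 _))]
    intro i
    rw [Real.dist_eq]
    exact (abs_le_d1 _ _ i).trans (hgeo j)
  obtain ⟨y, hy⟩ := cauchySeq_tendsto_of_complete hcauchy
  have hcoord : ∀ i, Filter.Tendsto (fun j => u j i) Filter.atTop (nhds (y i)) :=
    tendsto_pi_nhds.mp hy
  have hynn : ∀ i, 0 ≤ y i := fun i => ge_of_tendsto' (hcoord i) (fun j => (hInD j).1 i)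
  have hysum : ∑ i, y i ≤ M := by
    have hts : Filter.Tendsto (fun j => ∑ i, u j i) Filter.atTop (nhds (∑ i, y i)) :=
      tendsto_finset_sum _ (fun i _ => hcoord i)
    exact le_of_tendsto' hts (fun j => (hInD j).2)
  have hd1tend : Filter.Tendsto (fun j => d1 y (u j)) Filter.atTop (nhds 0) := by
    have h0 : Filter.Tendsto (fun j => ∑ i, |y i - u j i|) Filter.atTop
        (nhds (∑ _i : Fin n, (0:ℝ))) := by
      apply tendsto_finset_sum
      intro i _
      have h1 : Filter.Tendsto (fun j => y i - u j i) Filter.atTop (nhds 0) := by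
        have h2 := Filter.Tendsto.sub (tendsto_const_nhds (x := y i)) (hcoord i)
        simpa using h2
      simpa using h1.abs
    simpa [d1] using h0
  have hfix : Phi P v α y = y := by
    have hb : ∀ j, d1 (Phi P v α y) y ≤ c * d1 y (u j) + d1 y (u (j+1)) := by
      intro j
      have h1 : d1 (Phi P v α y) y
          ≤ d1 (Phi P v α y) (Phi P v α (u j)) + d1 (Phi P v α (u j)) y :=
        d1_triangle _ _ _
      have h2 : d1 (Phi P v α y) (Phi P v α (u j)) ≤ c * d1 y (u j) :=
        phi_contraction hP0 hPs hv0 hv1 hα0 hα1 hynn (hInD j).1 hysum (hInD j).2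
      have h3 : d1 (Phi P v α (u j)) y = d1 y (u (j+1)) := by
        rw [← husucc, d1_comm]
      linarith
    have htend : Filter.Tendsto (fun j => c * d1 y (u j) + d1 y (u (j+1)))
        Filter.atTop (nhds 0) := by
      have h1 := hd1tend.const_mul c
      have h2 := hd1tend.comp (Filter.tendsto_add_atTop_nat 1)
      have h3 := h1.add h2
      simpa using h3
    have hle : d1 (Phi P v α y) y ≤ 0 := ge_of_tendsto' htend hb
    exact d1_eq_zero hle
  exact ⟨y, hynn, hysum, hfix⟩

end Main

theorem main_aux (n m : ℕ) (P : Fin n → (Fin (m+1) → Fin n) → ℝ)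
    (hP0 : ∀ i j, 0 ≤ P i j) (hPs : ∀ j, ∑ i, P i j ≤ 1)
    (v : Fin n → ℝ) (hv0 : ∀ i, 0 ≤ v i) (hv1 : ∑ i, v i = 1)
    (α : ℝ) (hα0 : 0 ≤ α) (hα1 : α < 1)
    (hc : (2*(m:ℝ)+1) * α * ((1 - α) ^ (-(1:ℝ)/((m:ℝ)+1))) ^ (m:ℕ) < 1) :
    ∃! y : Fin n → ℝ, (∀ i, 0 ≤ y i) ∧ (∑ i, y i ≤ (1 - α) ^ (-(1:ℝ)/((m:ℝ)+1))) ∧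
      ∀ i, (∑ l, y l) ^ (m:ℕ) * y i - α * contr P y i = v i := by
  obtain ⟨y, hynn, hysum, hfix⟩ := exists_fixed hP0 hPs hv0 hv1 hα0 hα1 hc
  refine ⟨y, ⟨hynn, hysum, fix_to_sol hP0 hv1 hα0 hynn hfix⟩, ?_⟩
  rintro z ⟨hznn, hzsum, hzsol⟩
  have hzfix : Phi P v α z = z := sol_to_fix hP0 hv1 hα0 hznn hzsol
  have hcon := phi_contraction hP0 hPs hv0 hv1 hα0 hα1 hznn hynn hzsum hysum
  rw [hzfix, hfix] at hcon
  have hd0 : d1 z y ≤ 0 := by nlinarith [d1_nonneg z y]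
  exact d1_eq_zero hd0

end MLPPR

theorem mlppr_uniqueness (n k : ℕ) (hn : 0 < n) (hk : 2 ≤ k)
    (P : Fin n → (Fin (k-1) → Fin n) → ℝ)
    (hP0 : ∀ i j, 0 ≤ P i j) (hPs : ∀ j, ∑ i, P i j ≤ 1)
    (v : Fin n → ℝ) (hv0 : ∀ i, 0 ≤ v i) (hv1 : ∑ i, v i = 1)
    (α : ℝ) (hα0 : 0 ≤ α) (hα1 : α < 1)
    (hς : (2*(k:ℝ)-3) * α * (1 - α) ^ (-((k:ℝ)-2)/((k:ℝ)-1)) < 1) :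
    ∃! y : Fin n → ℝ, (∀ i, 0 ≤ y i) ∧ ∑ i, y i ≤ (1 - α) ^ (-(1:ℝ)/((k:ℝ)-1)) ∧
      ∀ i, (∑ l, y l) ^ (k-2) * y i - α * contr P y i = v i := by
  obtain ⟨m, rfl⟩ : ∃ m, k = m + 2 := ⟨k - 2, by omega⟩
  have e1 : (2:ℝ)*((m+2:ℕ):ℝ)-3 = 2*(m:ℝ)+1 := by push_cast; ring
  have e2 : -(((m+2:ℕ):ℝ)-2)/(((m+2:ℕ):ℝ)-1) = -(m:ℝ)/((m:ℝ)+1) := by push_cast; ring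
  have e3 : -(1:ℝ)/(((m+2:ℕ):ℝ)-1) = -(1:ℝ)/((m:ℝ)+1) := by push_cast; ring
  rw [e1, e2] at hς
  have hc : (2*(m:ℝ)+1) * α * ((1 - α) ^ (-(1:ℝ)/((m:ℝ)+1))) ^ (m:ℕ) < 1 := by
    rw [MLPPR.Mpow_m hα1]
    exact hς
  simp only [e3]
  exact MLPPR.main_aux n m P hP0 hPs v hv0 hv1 α hα0 hα1 hc
end

section
/- Perturbation bound: Let P̄ and P̄_p = P̄ + δP̄ be columnwise-substochastic tensors, v and v_p = v + δv stochastic vectors, and α with ς = (2k−3)α(1−α)^{−(k−2)/(k−1)} < 1. If y, y_p ∈ Δ solve (e^Ty)^{k-2}y − αP̄y^{k-1} = v and (e^Ty_p)^{k-2}y_p − αP̄_p y_p^{k-1} = v_p respectively, then ‖y_p − y‖_1 ≤ [(2k−3)/((k−1)(1−ς))] ( (α/(1−α)) ‖R(δP̄)‖_1 + ‖δv‖_1 ). -/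
open Finset Real

section aux

set_option maxHeartbeats 1000000

lemma sum_prod_pow {n : ℕ} (m : ℕ) (a : Fin n → ℝ) :
    ∑ j : Fin m → Fin n, ∏ s : Fin m, a (j s) = (∑ i, a i) ^ m := by
  rw [← Fin.prod_const m (∑ i, a i), Finset.prod_univ_sum]
  simp [Fintype.piFinset_univ]

lemma kron_key {n : ℕ} (m : ℕ) (a b : Fin n → ℝ) :
    ∑ j : Fin (m+1) → Fin n, |(∏ s, a (j s)) - ∏ s, b (j s)|
        = ∑ i : Fin n, ∑ j : Fin m → Fin n,
            |a i * (∏ s, a (j s)) - b i * ∏ s, b (j s)| := by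
  rw [← (Fin.insertNthEquiv (fun _ => Fin n) 0).sum_comp]
  rw [Fintype.sum_prod_type]
  refine Finset.sum_congr rfl fun i _ => Finset.sum_congr rfl fun j _ => ?_
  simp [Fin.insertNthEquiv, Fin.insertNth, Fin.prod_univ_succ]

lemma kron {n : ℕ} (m : ℕ) (a b : Fin n → ℝ) (ha : ∀ i, 0 ≤ a i) (hb : ∀ i, 0 ≤ b i)
    (M : ℝ) (hM0 : 0 ≤ M) (haM : ∑ i, a i ≤ M) (hbM : ∑ i, b i ≤ M) :
    ∑ j : Fin m → Fin n, |(∏ s, a (j s)) - ∏ s, b (j s)| ≤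
      m * M ^ (m - 1) * ∑ i, |a i - b i| := by
  have hc0 : (0:ℝ) ≤ ∑ i, |a i - b i| := Finset.sum_nonneg fun i _ => abs_nonneg _
  induction m with
  | zero => simp
  | succ m ih =>
    rw [kron_key]
    have step : ∀ i : Fin n, ∀ j : Fin m → Fin n,
        |a i * (∏ s, a (j s)) - b i * ∏ s, b (j s)| ≤
          |a i - b i| * (∏ s, a (j s)) + b i * |(∏ s, a (j s)) - ∏ s, b (j s)| := by
      intro i j
      have h1 : a i * (∏ s, a (j s)) - b i * ∏ s, b (j s)
          = (a i - b i) * (∏ s, a (j s)) + b i * ((∏ s, a (j s)) - ∏ s, b (j s)) := by ring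
      rw [h1]
      refine (abs_add_le _ _).trans ?_
      rw [abs_mul, abs_mul, abs_of_nonneg (Finset.prod_nonneg fun s _ => ha _),
        abs_of_nonneg (hb i)]
    calc ∑ i : Fin n, ∑ j : Fin m → Fin n, |a i * (∏ s, a (j s)) - b i * ∏ s, b (j s)|
        ≤ ∑ i : Fin n, ∑ j : Fin m → Fin n,
            (|a i - b i| * (∏ s, a (j s)) + b i * |(∏ s, a (j s)) - ∏ s, b (j s)|) := by
          exact Finset.sum_le_sum fun i _ => Finset.sum_le_sum fun j _ => step i j
      _ = (∑ i, |a i - b i|) * (∑ j : Fin m → Fin n, ∏ s, a (j s))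
          + (∑ i, b i) * (∑ j : Fin m → Fin n, |(∏ s, a (j s)) - ∏ s, b (j s)|) := by
          simp [Finset.sum_add_distrib, ← Finset.sum_mul, ← Finset.mul_sum]
      _ ≤ (∑ i, |a i - b i|) * M ^ m
          + M * ((m : ℝ) * M ^ (m - 1) * ∑ i, |a i - b i|) := by
          apply add_le_add
          · apply mul_le_mul_of_nonneg_left _ hc0
            rw [sum_prod_pow]
            exact pow_le_pow_left₀ (Finset.sum_nonneg fun i _ => ha i) haM m
          · have hT0 : (0:ℝ) ≤ ∑ j : Fin m → Fin n, |(∏ s, a (j s)) - ∏ s, b (j s)| :=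
              Finset.sum_nonneg fun j _ => abs_nonneg _
            calc (∑ i, b i) * (∑ j : Fin m → Fin n, |(∏ s, a (j s)) - ∏ s, b (j s)|)
                ≤ M * (∑ j : Fin m → Fin n, |(∏ s, a (j s)) - ∏ s, b (j s)|) :=
                  mul_le_mul_of_nonneg_right hbM hT0
              _ ≤ M * ((m : ℝ) * M ^ (m - 1) * ∑ i, |a i - b i|) :=
                  mul_le_mul_of_nonneg_left ih hM0
      _ ≤ (m + 1 : ℕ) * M ^ ((m + 1) - 1) * ∑ i, |a i - b i| := by
          have hMM : M * ((m : ℝ) * M ^ (m - 1)) = (m : ℝ) * M ^ m := by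
            cases m with
            | zero => simp
            | succ m => rw [pow_succ]; push_cast; ring
          rw [Nat.add_sub_cancel]
          push_cast
          nlinarith [hc0, pow_nonneg hM0 m, hMM]

lemma pow_sub_lemma (m : ℕ) (s t : ℝ) (ht : 0 ≤ t) (hts : t ≤ s) :
    s * (s ^ m - t ^ m) ≤ m * s ^ m * (s - t) := by
  induction m with
  | zero => simp
  | succ m ih =>
    have hQP : t ^ m ≤ s ^ m := pow_le_pow_left₀ ht hts m
    have hs0 : 0 ≤ s := ht.trans hts
    have h1 : s * (s ^ (m+1) - t ^ (m+1))
        = s * (s * (s ^ m - t ^ m)) + s * t ^ m * (s - t) := by ring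
    have h2 : s * (s * (s ^ m - t ^ m)) ≤ s * (m * s ^ m * (s - t)) :=
      mul_le_mul_of_nonneg_left ih hs0
    have h3 : s * t ^ m * (s - t) ≤ s * s ^ m * (s - t) := by
      apply mul_le_mul_of_nonneg_right _ (by linarith)
      exact mul_le_mul_of_nonneg_left hQP hs0
    have h4 : (↑(m+1) : ℝ) * s ^ (m+1) * (s - t)
        = s * (m * s ^ m * (s - t)) + s * s ^ m * (s - t) := by
      push_cast; ring
    linarith [h1.le, h1.ge]

lemma lip_core {n : ℕ} (m : ℕ) (x y : Fin n → ℝ) (hy0 : ∀ i, 0 ≤ y i)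
    (ht1 : 1 ≤ ∑ i, y i) (hts : ∑ i, y i ≤ ∑ i, x i) :
    ∑ i, |x i - y i| ≤ (2*(m:ℝ)+1)/((m:ℝ)+1) *
      ∑ i, |(∑ l, x l) ^ m * x i - (∑ l, y l) ^ m * y i| := by
  set s := ∑ i, x i with hs
  set t := ∑ i, y i with htdef
  set c := ∑ i, |x i - y i| with hcdef
  set D := ∑ i, |s ^ m * x i - t ^ m * y i| with hDdef
  have ht0 : (0:ℝ) ≤ t := zero_le_one.trans ht1
  have hs1 : (1:ℝ) ≤ s := ht1.trans hts
  have hs0 : (0:ℝ) ≤ s := zero_le_one.trans hs1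
  set P := s ^ m with hPdef
  set Q := t ^ m with hQdef
  have hQ1 : (1:ℝ) ≤ Q := one_le_pow₀ ht1
  have hQP : Q ≤ P := pow_le_pow_left₀ ht0 hts m
  have hc0 : (0:ℝ) ≤ c := Finset.sum_nonneg fun i _ => abs_nonneg _
  have hD0 : (0:ℝ) ≤ D := Finset.sum_nonneg fun i _ => abs_nonneg _
  have hP0 : (0:ℝ) < P := lt_of_lt_of_le one_pos (hQ1.trans hQP)
  have hm0 : (0:ℝ) ≤ (m:ℝ) := Nat.cast_nonneg m
  have hF1 : s ^ (m+1) - t ^ (m+1) ≤ D := by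
    have h : s ^ (m+1) - t ^ (m+1) = ∑ i, (P * x i - Q * y i) := by
      rw [Finset.sum_sub_distrib, ← Finset.mul_sum, ← Finset.mul_sum, ← hs, ← htdef,
        hPdef, hQdef, ← pow_succ, ← pow_succ]
    rw [h]
    exact (Finset.sum_le_sum fun i _ => le_abs_self _)
  have hF2 : s * (P - Q) ≤ m * P * (s - t) := by
    rw [hPdef, hQdef]; exact pow_sub_lemma m s t ht0 hts
  have hF3 : P * c ≤ D + (P - Q) * t := by
    have hpt : ∀ i, P * |x i - y i| ≤ |P * x i - Q * y i| + (P - Q) * y i := by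
      intro i
      have h2 : |P * (x i - y i)| ≤ |P * x i - Q * y i| + |(P - Q) * y i| := by
        have h1 : P * (x i - y i) = (P * x i - Q * y i) - (P - Q) * y i := by ring
        rw [h1]; exact abs_sub _ _
      calc P * |x i - y i| = |P * (x i - y i)| := by
            rw [abs_mul, abs_of_nonneg hP0.le]
        _ ≤ |P * x i - Q * y i| + |(P - Q) * y i| := h2
        _ = |P * x i - Q * y i| + (P - Q) * y i := by
            rw [abs_mul, abs_of_nonneg (by linarith : (0:ℝ) ≤ P - Q),
              abs_of_nonneg (hy0 i)]
    calc P * c = ∑ i, P * |x i - y i| := by rw [hcdef, Finset.mul_sum]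
      _ ≤ ∑ i, (|P * x i - Q * y i| + (P - Q) * y i) :=
          Finset.sum_le_sum fun i _ => hpt i
      _ = D + (P - Q) * t := by
          rw [Finset.sum_add_distrib, ← hDdef, ← Finset.mul_sum, ← htdef]
  have hF4 : s * (P - Q) + Q * (s - t) ≤ D := by
    have h : s ^ (m+1) - t ^ (m+1) = s * (P - Q) + Q * (s - t) := by
      rw [hPdef, hQdef]; ring
    linarith [hF1, h.symm.le]
  have hu0 : 0 ≤ s * (P - Q) := mul_nonneg hs0 (by linarith)
  clear_value s t c D P Q
  have h6 : s * (P - Q) * (Q + m * P) ≤ m * P * D := by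
    nlinarith [mul_le_mul_of_nonneg_left hF2 (by linarith : (0:ℝ) ≤ Q),
      mul_le_mul_of_nonneg_left hF4 (by positivity : (0:ℝ) ≤ (m:ℝ) * P)]
  have h7 : c * P * (Q + m * P) ≤ D * (Q + 2 * m * P) := by
    have hPQt : (P - Q) * t ≤ s * (P - Q) := by nlinarith
    nlinarith [mul_le_mul_of_nonneg_right hF3 (by positivity : (0:ℝ) ≤ Q + m * P), h6]
  have h8 : ((m:ℝ)+1) * Q * (Q + 2 * m * P) ≤ (2*m+1) * P * (Q + m * P) := by
    nlinarith [mul_nonneg (by linarith : (0:ℝ) ≤ P - Q)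
      (by positivity : (0:ℝ) ≤ (m:ℝ)*(2*m+1)*P + ((m:ℝ)+1)*Q)]
  have hpos : (0:ℝ) < P * (Q + m * P) := by
    apply mul_pos hP0
    nlinarith
  have h9 : (((m:ℝ)+1) * Q * c) * (P * (Q + m * P)) ≤ ((2*m+1) * D) * (P * (Q + m * P)) := by
    calc (((m:ℝ)+1) * Q * c) * (P * (Q + m * P)) = ((m:ℝ)+1) * Q * (c * P * (Q + m * P)) := by
          ring
      _ ≤ ((m:ℝ)+1) * Q * (D * (Q + 2*m*P)) := mul_le_mul_of_nonneg_left h7 (by positivity)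
      _ = D * (((m:ℝ)+1) * Q * (Q + 2*m*P)) := by ring
      _ ≤ D * ((2*m+1) * P * (Q + m * P)) := mul_le_mul_of_nonneg_left h8 hD0
      _ = ((2*m+1) * D) * (P * (Q + m * P)) := by ring
  have hfin : ((m:ℝ)+1) * Q * c ≤ (2*m+1) * D := le_of_mul_le_mul_right h9 hpos
  have hlast : ((m:ℝ)+1) * c ≤ (2*m+1) * D := by
    nlinarith [mul_nonneg (mul_nonneg (by linarith : (0:ℝ) ≤ (m:ℝ)+1) hc0)
      (by linarith : (0:ℝ) ≤ Q - 1)]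
  rw [div_mul_eq_mul_div, le_div_iff₀ (by positivity : (0:ℝ) < (m:ℝ)+1)]
  linarith

lemma lip {n : ℕ} (m : ℕ) (x y : Fin n → ℝ) (hx0 : ∀ i, 0 ≤ x i) (hy0 : ∀ i, 0 ≤ y i)
    (hx1 : 1 ≤ ∑ i, x i) (hy1 : 1 ≤ ∑ i, y i) :
    ∑ i, |x i - y i| ≤ (2*(m:ℝ)+1)/((m:ℝ)+1) *
      ∑ i, |(∑ l, x l) ^ m * x i - (∑ l, y l) ^ m * y i| := by
  rcases le_total (∑ i, y i) (∑ i, x i) with h | h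
  · exact lip_core m x y hy0 hy1 h
  · have h2 := lip_core m y x hx0 hx1 h
    calc ∑ i, |x i - y i| = ∑ i, |y i - x i| := by simp [abs_sub_comm]
      _ ≤ (2*(m:ℝ)+1)/((m:ℝ)+1) *
          ∑ i, |(∑ l, y l) ^ m * y i - (∑ l, x l) ^ m * x i| := h2
      _ = (2*(m:ℝ)+1)/((m:ℝ)+1) *
          ∑ i, |(∑ l, x l) ^ m * x i - (∑ l, y l) ^ m * y i| := by
          congr 1
          exact Finset.sum_congr rfl fun i _ => abs_sub_comm _ _

theorem mlppr_perturbation (n k : ℕ) (hn : 0 < n) (hk : 2 ≤ k)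
    (Pb δP : Fin n → (Fin (k-1) → Fin n) → ℝ)
    (hP0 : ∀ i j, 0 ≤ Pb i j) (hPs : ∀ j, ∑ i, Pb i j ≤ 1)
    (hPp0 : ∀ i j, 0 ≤ Pb i j + δP i j) (hPps : ∀ j, ∑ i, (Pb i j + δP i j) ≤ 1)
    (v δv : Fin n → ℝ) (hv0 : ∀ i, 0 ≤ v i) (hv1 : ∑ i, v i = 1)
    (hvp0 : ∀ i, 0 ≤ v i + δv i) (hvp1 : ∑ i, (v i + δv i) = 1)
    (α : ℝ) (hα0 : 0 ≤ α) (hα1 : α < 1)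
    (hς : (2*(k:ℝ)-3) * α * (1 - α) ^ (-((k:ℝ)-2)/((k:ℝ)-1)) < 1)
    (y yp : Fin n → ℝ) (hy0 : ∀ i, 0 ≤ y i) (hyΔ : ∑ i, y i ≤ (1 - α) ^ (-(1:ℝ)/((k:ℝ)-1)))
    (hyp0 : ∀ i, 0 ≤ yp i) (hypΔ : ∑ i, yp i ≤ (1 - α) ^ (-(1:ℝ)/((k:ℝ)-1)))
    (heq : ∀ i, (∑ l, y l) ^ (k-2) * y i - α * contr Pb y i = v i)
    (heqp : ∀ i, (∑ l, yp l) ^ (k-2) * yp i -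
      α * contr (fun i j => Pb i j + δP i j) yp i = v i + δv i) :
    ∑ i, |yp i - y i| ≤
      (2*(k:ℝ)-3) / (((k:ℝ)-1) * (1 - ((2*(k:ℝ)-3) * α * (1 - α) ^ (-((k:ℝ)-2)/((k:ℝ)-1))))) *
        (α/(1-α) * (⨆ j : Fin (k-1) → Fin n, ∑ i, |δP i j|) + ∑ i, |δv i|) := by
  have h1α : (0:ℝ) < 1 - α := by linarith
  have hk2r : (2:ℝ) ≤ (k:ℝ) := by exact_mod_cast hk
  have hkm1 : ((k-1:ℕ):ℝ) = (k:ℝ)-1 := by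
    rw [Nat.cast_sub (by omega : 1 ≤ k)]; norm_num
  have hkm2 : ((k-2:ℕ):ℝ) = (k:ℝ)-2 := by
    rw [Nat.cast_sub (by omega : 2 ≤ k)]; norm_num
  set M : ℝ := (1 - α) ^ (-(1:ℝ)/((k:ℝ)-1)) with hMdef
  set W : ℝ := (1 - α) ^ (-((k:ℝ)-2)/((k:ℝ)-1)) with hWdef
  have hM1 : (1:ℝ) ≤ M := by
    rw [hMdef]
    apply Real.one_le_rpow_of_pos_of_le_one_of_nonpos h1α (by linarith)
    apply div_nonpos_of_nonpos_of_nonneg <;> linarith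
  have hM0 : (0:ℝ) ≤ M := by linarith
  have hMk1 : M ^ (k-1:ℕ) = (1-α)⁻¹ := by
    rw [hMdef, ← Real.rpow_natCast ((1-α) ^ (-(1:ℝ)/((k:ℝ)-1))) (k-1),
      ← Real.rpow_mul h1α.le, hkm1]
    rw [div_mul_cancel₀ _ (by linarith : (k:ℝ)-1 ≠ 0)]
    exact Real.rpow_neg_one _
  have hMk2 : M ^ (k-2:ℕ) = W := by
    rw [hMdef, hWdef, ← Real.rpow_natCast ((1-α) ^ (-(1:ℝ)/((k:ℝ)-1))) (k-2),
      ← Real.rpow_mul h1α.le, hkm2]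
    congr 1
    field_simp
  -- solutions have sum ≥ 1
  have key : ∀ (P : Fin n → (Fin (k-1) → Fin n) → ℝ) (z w : Fin n → ℝ),
      (∀ i j, 0 ≤ P i j) → (∀ i, 0 ≤ z i) → (∑ i, w i = 1) →
      (∀ i, (∑ l, z l) ^ (k-2) * z i - α * contr P z i = w i) → 1 ≤ ∑ l, z l := by
    intro P z w hP hz hw he
    have hz0 : (0:ℝ) ≤ ∑ l, z l := Finset.sum_nonneg fun i _ => hz i
    have hc0 : (0:ℝ) ≤ ∑ i, contr P z i :=
      Finset.sum_nonneg fun i _ => Finset.sum_nonneg fun j _ =>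
        mul_nonneg (hP i j) (Finset.prod_nonneg fun s _ => hz _)
    have hsum : (∑ l, z l) ^ (k-2) * (∑ l, z l) - α * ∑ i, contr P z i = 1 := by
      rw [← hw, ← Finset.sum_congr rfl (fun i hi => he i), Finset.sum_sub_distrib,
        ← Finset.mul_sum, ← Finset.mul_sum]
    have hpow : 1 ≤ (∑ l, z l) ^ (k-1) := by
      have hkk : k - 2 + 1 = k - 1 := by omega
      rw [← hkk, pow_succ]
      nlinarith [mul_nonneg hα0 hc0]
    by_contra hlt
    push_neg at hlt
    have := pow_lt_one₀ hz0 hlt (by omega : k - 1 ≠ 0)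
    linarith
  have hs1 : 1 ≤ ∑ l, y l := key Pb y v hP0 hy0 hv1 heq
  have htp1 : 1 ≤ ∑ l, yp l :=
    key (fun i j => Pb i j + δP i j) yp (fun i => v i + δv i) hPp0 hyp0 hvp1 heqp
  -- the sup over columns
  set K : ℝ := ⨆ j : Fin (k-1) → Fin n, ∑ i, |δP i j| with hKdef
  have hKub : ∀ j : Fin (k-1) → Fin n, ∑ i, |δP i j| ≤ K := by
    intro j
    exact le_ciSup (f := fun j : Fin (k-1) → Fin n => ∑ i, |δP i j|)
      (Set.Finite.bddAbove (Set.finite_range _)) j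
  have hK0 : (0:ℝ) ≤ K :=
    le_trans (Finset.sum_nonneg fun i _ => abs_nonneg _) (hKub fun _ => ⟨0, hn⟩)
  set c : ℝ := ∑ i, |yp i - y i| with hcdef
  set D : ℝ := ∑ i, |(∑ l, yp l) ^ (k-2) * yp i - (∑ l, y l) ^ (k-2) * y i| with hDdef
  have hc0 : (0:ℝ) ≤ c := Finset.sum_nonneg fun i _ => abs_nonneg _
  -- Lipschitz step
  have hlip : c ≤ (2*(k:ℝ)-3)/((k:ℝ)-1) * D := by
    have h := lip (k-2) yp y hyp0 hy0 htp1 hs1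
    rw [hkm2] at h
    have : (2*((k:ℝ)-2)+1)/(((k:ℝ)-2)+1) = (2*(k:ℝ)-3)/((k:ℝ)-1) := by
      congr 1 <;> ring
    rw [this] at h
    exact h
  -- bound D
  have hptw : ∀ i, |(∑ l, yp l) ^ (k-2) * yp i - (∑ l, y l) ^ (k-2) * y i| ≤
      |δv i| + α * (∑ j : Fin (k-1) → Fin n, |δP i j| * ∏ s, yp (j s))
        + α * (∑ j : Fin (k-1) → Fin n, Pb i j * |(∏ s, yp (j s)) - ∏ s, y (j s)|) := by
    intro i
    have e1 : (∑ l, yp l) ^ (k-2) * yp i - (∑ l, y l) ^ (k-2) * y i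
        = δv i + α * ((∑ j : Fin (k-1) → Fin n, δP i j * ∏ s, yp (j s))
            + ∑ j : Fin (k-1) → Fin n, Pb i j * ((∏ s, yp (j s)) - ∏ s, y (j s))) := by
      have h1 := heq i
      have h2 := heqp i
      have e2 : contr (fun i j => Pb i j + δP i j) yp i - contr Pb y i
          = (∑ j : Fin (k-1) → Fin n, δP i j * ∏ s, yp (j s))
            + ∑ j : Fin (k-1) → Fin n, Pb i j * ((∏ s, yp (j s)) - ∏ s, y (j s)) := by
        simp only [contr, ← Finset.sum_sub_distrib, ← Finset.sum_add_distrib]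
        exact Finset.sum_congr rfl fun j _ => by ring
      rw [← e2]
      linarith [h1, h2]
    rw [e1]
    have hA : |∑ j : Fin (k-1) → Fin n, δP i j * ∏ s, yp (j s)|
        ≤ ∑ j : Fin (k-1) → Fin n, |δP i j| * ∏ s, yp (j s) := by
      refine (Finset.abs_sum_le_sum_abs _ _).trans (le_of_eq ?_)
      refine Finset.sum_congr rfl fun j _ => ?_
      rw [abs_mul, abs_of_nonneg (Finset.prod_nonneg fun s _ => hyp0 _)]
    have hB : |∑ j : Fin (k-1) → Fin n, Pb i j * ((∏ s, yp (j s)) - ∏ s, y (j s))|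
        ≤ ∑ j : Fin (k-1) → Fin n, Pb i j * |(∏ s, yp (j s)) - ∏ s, y (j s)| := by
      refine (Finset.abs_sum_le_sum_abs _ _).trans (le_of_eq ?_)
      refine Finset.sum_congr rfl fun j _ => ?_
      rw [abs_mul, abs_of_nonneg (hP0 i j)]
    calc |δv i + α * ((∑ j : Fin (k-1) → Fin n, δP i j * ∏ s, yp (j s))
            + ∑ j : Fin (k-1) → Fin n, Pb i j * ((∏ s, yp (j s)) - ∏ s, y (j s)))|
        ≤ |δv i| + |α * ((∑ j : Fin (k-1) → Fin n, δP i j * ∏ s, yp (j s))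
            + ∑ j : Fin (k-1) → Fin n, Pb i j * ((∏ s, yp (j s)) - ∏ s, y (j s)))| :=
          abs_add_le _ _
      _ ≤ |δv i| + α * (|∑ j : Fin (k-1) → Fin n, δP i j * ∏ s, yp (j s)|
            + |∑ j : Fin (k-1) → Fin n, Pb i j * ((∏ s, yp (j s)) - ∏ s, y (j s))|) := by
          rw [abs_mul, abs_of_nonneg hα0]
          exact add_le_add_right (mul_le_mul_of_nonneg_left (abs_add_le _ _) hα0) _
      _ ≤ |δv i| + α * (∑ j : Fin (k-1) → Fin n, |δP i j| * ∏ s, yp (j s))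
            + α * (∑ j : Fin (k-1) → Fin n, Pb i j * |(∏ s, yp (j s)) - ∏ s, y (j s)|) := by
          have := add_le_add hA hB
          nlinarith [mul_le_mul_of_nonneg_left this hα0]
  have hD : D ≤ (∑ i, |δv i|) + α * (K * (1-α)⁻¹) + α * (((k:ℝ)-1) * W * c) := by
    have hAsum : ∑ i, (∑ j : Fin (k-1) → Fin n, |δP i j| * ∏ s, yp (j s))
        ≤ K * (1-α)⁻¹ := by
      rw [Finset.sum_comm]
      calc ∑ j : Fin (k-1) → Fin n, ∑ i, |δP i j| * ∏ s, yp (j s)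
          = ∑ j : Fin (k-1) → Fin n, (∑ i, |δP i j|) * ∏ s, yp (j s) := by
            exact Finset.sum_congr rfl fun j _ => (Finset.sum_mul _ _ _).symm
        _ ≤ ∑ j : Fin (k-1) → Fin n, K * ∏ s, yp (j s) := by
            refine Finset.sum_le_sum fun j _ => ?_
            exact mul_le_mul_of_nonneg_right (hKub j)
              (Finset.prod_nonneg fun s _ => hyp0 _)
        _ = K * (∑ l, yp l) ^ (k-1) := by rw [← Finset.mul_sum, sum_prod_pow]
        _ ≤ K * (1-α)⁻¹ := by
            rw [← hMk1]
            exact mul_le_mul_of_nonneg_left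
              (pow_le_pow_left₀ (Finset.sum_nonneg fun i _ => hyp0 i) hypΔ _) hK0
    have hBsum : ∑ i, (∑ j : Fin (k-1) → Fin n, Pb i j * |(∏ s, yp (j s)) - ∏ s, y (j s)|)
        ≤ ((k:ℝ)-1) * W * c := by
      rw [Finset.sum_comm]
      calc ∑ j : Fin (k-1) → Fin n, ∑ i, Pb i j * |(∏ s, yp (j s)) - ∏ s, y (j s)|
          = ∑ j : Fin (k-1) → Fin n, (∑ i, Pb i j) * |(∏ s, yp (j s)) - ∏ s, y (j s)| := by
            exact Finset.sum_congr rfl fun j _ => (Finset.sum_mul _ _ _).symm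
        _ ≤ ∑ j : Fin (k-1) → Fin n, |(∏ s, yp (j s)) - ∏ s, y (j s)| := by
            refine Finset.sum_le_sum fun j _ => ?_
            calc (∑ i, Pb i j) * |(∏ s, yp (j s)) - ∏ s, y (j s)|
                ≤ 1 * |(∏ s, yp (j s)) - ∏ s, y (j s)| :=
                  mul_le_mul_of_nonneg_right (hPs j) (abs_nonneg _)
              _ = |(∏ s, yp (j s)) - ∏ s, y (j s)| := one_mul _
        _ ≤ (k-1:ℕ) * M ^ ((k-1) - 1) * ∑ i, |yp i - y i| :=
            kron (k-1) yp y hyp0 hy0 M hM0 hypΔ hyΔ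
        _ = ((k:ℝ)-1) * W * c := by
            have hnn : (k-1) - 1 = k - 2 := by omega
            rw [hnn, hkm1, hMk2, hcdef]
    calc D ≤ ∑ i, (|δv i| + α * (∑ j : Fin (k-1) → Fin n, |δP i j| * ∏ s, yp (j s))
          + α * (∑ j : Fin (k-1) → Fin n, Pb i j * |(∏ s, yp (j s)) - ∏ s, y (j s)|)) :=
          Finset.sum_le_sum fun i _ => hptw i
      _ = (∑ i, |δv i|)
          + α * (∑ i, ∑ j : Fin (k-1) → Fin n, |δP i j| * ∏ s, yp (j s))
          + α * (∑ i, ∑ j : Fin (k-1) → Fin n, Pb i j * |(∏ s, yp (j s)) - ∏ s, y (j s)|) := by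
          rw [Finset.sum_add_distrib, Finset.sum_add_distrib, ← Finset.mul_sum, ← Finset.mul_sum]
      _ ≤ (∑ i, |δv i|) + α * (K * (1-α)⁻¹) + α * (((k:ℝ)-1) * W * c) := by
          have := mul_le_mul_of_nonneg_left hAsum hα0
          have := mul_le_mul_of_nonneg_left hBsum hα0
          linarith
  -- final algebra
  set E : ℝ := α/(1-α) * K + ∑ i, |δv i| with hEdef
  have hαK : α * (K * (1-α)⁻¹) = α/(1-α) * K := by
    field_simp
  have hk1ne : (k:ℝ) - 1 ≠ 0 := by linarith
  have hD' : D ≤ E + α*(((k:ℝ)-1)*W*c) := by rw [hEdef]; linarith [hD, hαK]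
  have hineq3 : c * ((k:ℝ)-1) ≤ (2*(k:ℝ)-3) * (E + α*(((k:ℝ)-1)*W*c)) := by
    calc c * ((k:ℝ)-1) ≤ ((2*(k:ℝ)-3)/((k:ℝ)-1) * D) * ((k:ℝ)-1) :=
          mul_le_mul_of_nonneg_right hlip (by linarith)
      _ = (2*(k:ℝ)-3) * D := by
          rw [div_mul_eq_mul_div, div_mul_cancel₀ _ hk1ne]
      _ ≤ (2*(k:ℝ)-3) * (E + α*(((k:ℝ)-1)*W*c)) :=
          mul_le_mul_of_nonneg_left hD' (by linarith)
  have hpos : (0:ℝ) < ((k:ℝ)-1) * (1 - (2*(k:ℝ)-3) * α * W) :=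
    mul_pos (by linarith) (by linarith)
  rw [div_mul_eq_mul_div, le_div_iff₀ hpos]
  nlinarith [hineq3]
end aux
end

section
/- Suppose the dangling correction P = P̄ + v ∘ (e^{∘(k−1)} − P̄ ×̄₁ e) holds, so that P is columnwise-stochastic. If a stochastic vector x solves the MPR equation x = α P x^{k-1} + (1−α) v, then y := (1 − α e^T(P̄ x^{k-1}))^{−1/(k−1)} x is a nonnegative solution of the MLPPR system (e^T y)^{k-2} y − α P̄ y^{k-1} = v. -/
open Finset Real

theorem mpr_solution_to_mlppr (n k : ℕ) (hn : 0 < n) (hk : 2 ≤ k)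
    (Pb P : Fin n → (Fin (k-1) → Fin n) → ℝ)
    (hPb0 : ∀ i j, 0 ≤ Pb i j) (hPbs : ∀ j, ∑ i, Pb i j ≤ 1)
    (v : Fin n → ℝ) (hv0 : ∀ i, 0 ≤ v i) (hv1 : ∑ i, v i = 1)
    (hP : ∀ i j, P i j = Pb i j + v i * (1 - ∑ l, Pb l j))
    (α : ℝ) (hα0 : 0 ≤ α) (hα1 : α < 1)
    (x : Fin n → ℝ) (hx0 : ∀ i, 0 ≤ x i) (hx1 : ∑ i, x i = 1)
    (hmpr : ∀ i, x i = α * contr P x i + (1-α) * v i) :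
    (∀ i, 0 ≤ (1 - α * ∑ l, contr Pb x l) ^ (-(1:ℝ)/((k:ℝ)-1)) * x i) ∧
    ∀ i, (∑ l, (1 - α * ∑ l', contr Pb x l') ^ (-(1:ℝ)/((k:ℝ)-1)) * x l) ^ (k-2) *
        ((1 - α * ∑ l, contr Pb x l) ^ (-(1:ℝ)/((k:ℝ)-1)) * x i) -
      α * contr Pb (fun l => (1 - α * ∑ l', contr Pb x l') ^ (-(1:ℝ)/((k:ℝ)-1)) * x l) i
        = v i := by
  have hprodnn : ∀ j : Fin (k-1) → Fin n, 0 ≤ ∏ s, x (j s) := fun j =>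
    Finset.prod_nonneg fun s _ => hx0 _
  -- sum of products equals 1
  have hsumprod : ∑ j : Fin (k-1) → Fin n, ∏ s, x (j s) = 1 := by
    have := Finset.prod_univ_sum (fun _ : Fin (k-1) => (Finset.univ : Finset (Fin n)))
      (fun _ i => x i)
    rw [Fintype.piFinset_univ] at this
    rw [← this]
    simp [hx1]
  set c : ℝ := ∑ l, contr Pb x l with hc
  have hcform : c = ∑ j : Fin (k-1) → Fin n, (∑ l, Pb l j) * ∏ s, x (j s) := by
    rw [hc]
    simp only [contr]
    rw [Finset.sum_comm]
    exact Finset.sum_congr rfl fun j _ => by rw [Finset.sum_mul]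
  have hc0 : 0 ≤ c := by
    rw [hcform]
    exact Finset.sum_nonneg fun j _ => mul_nonneg
      (Finset.sum_nonneg fun l _ => hPb0 l j) (hprodnn j)
  have hc1 : c ≤ 1 := by
    rw [hcform, ← hsumprod]
    exact Finset.sum_le_sum fun j _ => by
      nlinarith [hPbs j, hprodnn j]
  set s : ℝ := 1 - α * c with hs
  have hspos : 0 < s := by nlinarith [mul_le_of_le_one_right hα0 hc1]
  set r : ℝ := s ^ (-(1:ℝ)/((k:ℝ)-1)) with hr
  have hr0 : 0 ≤ r := Real.rpow_nonneg hspos.le _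
  have hk1 : ((k:ℝ)-1) ≠ 0 := by
    have : (2:ℝ) ≤ (k:ℝ) := by exact_mod_cast hk
    linarith
  have hcast : ((k-1 : ℕ) : ℝ) = (k:ℝ) - 1 := by
    have : 1 ≤ k := by omega
    push_cast [this]; ring
  have hrpow : r ^ (k-1) = s⁻¹ := by
    rw [hr, ← Real.rpow_natCast (s ^ (-(1:ℝ)/((k:ℝ)-1))) (k-1),
      ← Real.rpow_mul hspos.le, hcast]
    rw [show -(1:ℝ)/((k:ℝ)-1) * ((k:ℝ)-1) = -1 by field_simp]
    exact Real.rpow_neg_one s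
  -- contr P relation
  have hcontrP : ∀ i, contr P x i = contr Pb x i + v i * (1 - c) := by
    intro i
    simp only [contr]
    rw [hcform]
    rw [show (1:ℝ) - ∑ j : Fin (k-1) → Fin n, (∑ l, Pb l j) * ∏ s, x (j s)
      = ∑ j : Fin (k-1) → Fin n, (1 - ∑ l, Pb l j) * ∏ s, x (j s) by
        rw [← hsumprod]; rw [← Finset.sum_sub_distrib]
        exact Finset.sum_congr rfl fun j _ => by rw [hsumprod]; ring]
    rw [Finset.mul_sum, ← Finset.sum_add_distrib]
    exact Finset.sum_congr rfl fun j _ => by rw [hP]; ring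
  have hkey : ∀ i, x i - α * contr Pb x i = s * v i := by
    intro i
    have := hmpr i
    rw [hcontrP i] at this
    rw [hs]; linarith [this]
  constructor
  · exact fun i => mul_nonneg hr0 (hx0 i)
  · intro i
    have hsumr : ∑ l, r * x l = r := by rw [← Finset.mul_sum, hx1, mul_one]
    have hcontrr : contr Pb (fun l => r * x l) i = r ^ (k-1) * contr Pb x i := by
      simp only [contr, Finset.mul_sum]
      refine Finset.sum_congr rfl fun j _ => ?_
      rw [Finset.prod_mul_distrib, Finset.prod_const]
      simp [Finset.card_univ]
      ring
    rw [hsumr, hcontrr, hrpow]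
    have h21 : r ^ (k-2) * r = r ^ (k-1) := by
      rw [← pow_succ]
      congr 1
      omega
    calc r ^ (k-2) * (r * x i) - α * (s⁻¹ * contr Pb x i)
        = s⁻¹ * (x i - α * contr Pb x i) := by
          rw [← mul_assoc, h21, hrpow]; ring
      _ = v i := by rw [hkey i]; field_simp
end

section
/- Suppose the dangling correction P = P̄ + v ∘ (e^{∘(k−1)} − P̄ ×̄₁ e) holds. If y ∈ ℝ^n_+ solves the MLPPR system (e^T y)^{k-2} y − α P̄ y^{k-1} = v, then y solves the homogeneous MPR equation z (e^T z)^{k-2} = α P z^{k-1} + (1−α) v (e^T z)^{k-1}; in particular x = y/(e^T y) is a stochastic solution of x = α P x^{k-1} + (1−α) v. -/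
open Finset Real

theorem mlppr_solution_to_homogeneous_mpr (n k : ℕ) (hn : 0 < n) (hk : 2 ≤ k)
    (Pb P : Fin n → (Fin (k-1) → Fin n) → ℝ)
    (hPb0 : ∀ i j, 0 ≤ Pb i j) (hPbs : ∀ j, ∑ i, Pb i j ≤ 1)
    (v : Fin n → ℝ) (hv0 : ∀ i, 0 ≤ v i) (hv1 : ∑ i, v i = 1)
    (hP : ∀ i j, P i j = Pb i j + v i * (1 - ∑ l, Pb l j))
    (α : ℝ) (hα0 : 0 ≤ α) (hα1 : α < 1)
    (y : Fin n → ℝ) (hy0 : ∀ i, 0 ≤ y i)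
    (heq : ∀ i, (∑ l, y l) ^ (k-2) * y i - α * contr Pb y i = v i) :
    (∀ i, y i * (∑ l, y l) ^ (k-2) =
        α * contr P y i + (1-α) * v i * (∑ l, y l) ^ (k-1)) ∧
    ((∀ i, 0 ≤ y i / ∑ l, y l) ∧ (∑ i, y i / ∑ l, y l) = 1 ∧
      ∀ i, y i / (∑ l, y l) =
        α * contr P (fun j => y j / ∑ l, y l) i + (1-α) * v i) := by
  have hkk : k - 2 + 1 = k - 1 := by omega
  have hk1 : 0 < k - 1 := by omega
  set S := ∑ l, y l with hS
  -- sum of all products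
  have hsumprod : (∑ j : Fin (k-1) → Fin n, ∏ s, y (j s)) = S ^ (k-1) := by
    have : S ^ (k-1) = ∏ _s : Fin (k-1), ∑ l, y l := by
      simp [hS, Finset.prod_const]
    rw [this, Finset.prod_univ_sum]
    rw [Fintype.piFinset_univ]
  -- total mass of contr Pb y
  have hEexp : (∑ l, contr Pb y l)
      = ∑ j : Fin (k-1) → Fin n, (∑ l, Pb l j) * ∏ s, y (j s) := by
    unfold contr
    rw [Finset.sum_comm]
    exact Finset.sum_congr rfl fun j _ => by rw [Finset.sum_mul]
  have hsum : S ^ (k-1) - α * ∑ l, contr Pb y l = 1 := by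
    have h := Finset.sum_congr rfl fun i (_ : i ∈ Finset.univ) => heq i
    rw [Finset.sum_sub_distrib, ← Finset.mul_sum, ← Finset.mul_sum, hv1, ← hS] at h
    have hpow : S ^ (k-1) = S ^ (k-2) * S := by rw [← hkk]; exact pow_succ S (k-2)
    rw [hpow, h]
  have key : ∀ i, contr P y i
      = contr Pb y i + v i * (S ^ (k-1) - ∑ l, contr Pb y l) := by
    intro i
    rw [hEexp, ← hsumprod]
    unfold contr
    rw [← Finset.sum_sub_distrib, Finset.mul_sum, ← Finset.sum_add_distrib]
    refine Finset.sum_congr rfl fun j _ => ?_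
    rw [hP]
    ring
  have part1 : ∀ i, y i * S ^ (k-2)
      = α * contr P y i + (1-α) * v i * S ^ (k-1) := by
    intro i
    have h1 := heq i
    rw [key i]
    linear_combination h1 - v i * hsum
  have hS0 : 0 < S := by
    rcases (Finset.sum_nonneg fun i (_ : i ∈ Finset.univ) => hy0 i).lt_or_eq with h | h
    · exact h
    · exfalso
      have hy : ∀ i, y i = 0 := fun i =>
        (Finset.sum_eq_zero_iff_of_nonneg fun i _ => hy0 i).mp h.symm i (Finset.mem_univ i)
      have hc : ∀ i, contr Pb y i = 0 := by
        intro i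
        unfold contr
        refine Finset.sum_eq_zero fun j _ => ?_
        rw [Finset.prod_eq_zero (Finset.mem_univ (⟨0, hk1⟩ : Fin (k-1))) (hy _), mul_zero]
      have h0 : ∑ i, v i = 0 := Finset.sum_eq_zero fun i _ => by
        rw [← heq i, hy i, hc i]; ring
      rw [hv1] at h0; norm_num at h0
  have hSne : S ≠ 0 := hS0.ne'
  have hpow : S ^ (k-1) = S ^ (k-2) * S := by rw [← hkk]; exact pow_succ S (k-2)
  refine ⟨part1, fun i => div_nonneg (hy0 i) hS0.le, ?_, ?_⟩
  · rw [← Finset.sum_div, ← hS, div_self hSne]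
  · intro i
    have hcontr : contr P (fun j => y j / S) i = contr P y i / S ^ (k-1) := by
      unfold contr
      rw [Finset.sum_div]
      refine Finset.sum_congr rfl fun j _ => ?_
      rw [mul_div_assoc, Finset.prod_div_distrib, Finset.prod_const, Finset.card_univ,
        Fintype.card_fin]
    rw [hcontr]
    have h1 := part1 i
    have hSk : S ^ (k-1) ≠ 0 := pow_ne_zero _ hSne
    field_simp
    linear_combination S * h1 + y i * hpow
end

section
/- Closed-form splitting subproblem: given y_c ∈ Δ, the equation (e^T y)^{k-2} y = α P̄ y_c^{k-1} + v has the unique solution y = (1 + α e^T(P̄ y_c^{k-1}))^{−(k−2)/(k−1)} (α P̄ y_c^{k-1} + v) among nonnegative vectors, i.e., y = Φ(y_c), and this solution lies in Δ. -/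
open Finset Real

theorem splitting_closed_form (n k : ℕ) (hn : 0 < n) (hk : 2 ≤ k)
    (P : Fin n → (Fin (k-1) → Fin n) → ℝ)
    (hP0 : ∀ i j, 0 ≤ P i j) (hPs : ∀ j, ∑ i, P i j ≤ 1)
    (v : Fin n → ℝ) (hv0 : ∀ i, 0 ≤ v i) (hv1 : ∑ i, v i = 1)
    (α : ℝ) (hα0 : 0 ≤ α) (hα1 : α < 1)
    (yc : Fin n → ℝ) (hyc0 : ∀ i, 0 ≤ yc i)
    (hycΔ : ∑ i, yc i ≤ (1 - α) ^ (-(1:ℝ)/((k:ℝ)-1))) :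
    (∀ i, (∑ l, Phi k P v α yc l) ^ (k-2) * Phi k P v α yc i =
        α * contr P yc i + v i) ∧
    (∀ i, Phi k P v α yc i =
        (∑ l, (α * contr P yc l + v l)) ^ (-((k:ℝ)-2)/((k:ℝ)-1)) *
          (α * contr P yc i + v i)) ∧
    (∀ i, 0 ≤ Phi k P v α yc i) ∧
    (∑ i, Phi k P v α yc i ≤ (1 - α) ^ (-(1:ℝ)/((k:ℝ)-1))) ∧
    (∀ y : Fin n → ℝ, (∀ i, 0 ≤ y i) →
      (∀ i, (∑ l, y l) ^ (k-2) * y i = α * contr P yc i + v i) →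
      y = Phi k P v α yc) := by
  obtain ⟨m, rfl⟩ : ∃ m, k = m + 2 := ⟨k - 2, by omega⟩
  have hkm2 : m + 2 - 2 = m := by omega
  have hm1 : (0:ℝ) < (m:ℝ) + 1 := by positivity
  set e : ℝ := -(m:ℝ)/((m:ℝ)+1) with he
  have hcast : -(((m+2:ℕ):ℝ)-2)/(((m+2:ℕ):ℝ)-1) = e := by rw [he]; push_cast; ring_nf
  have hcast1 : -(1:ℝ)/(((m+2:ℕ):ℝ)-1) = -(1:ℝ)/((m:ℝ)+1) := by push_cast; ring_nf
  have hneg1 : -(1:ℝ)/((m:ℝ)+1) = -((1:ℝ)/((m:ℝ)+1)) := neg_div _ _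
  have hc0 : ∀ i, 0 ≤ contr P yc i := fun i => Finset.sum_nonneg fun j _ =>
    mul_nonneg (hP0 i j) (Finset.prod_nonneg fun s _ => hyc0 _)
  set b : Fin n → ℝ := fun i => α * contr P yc i + v i with hb
  have hb0 : ∀ i, 0 ≤ b i := fun i => add_nonneg (mul_nonneg hα0 (hc0 i)) (hv0 i)
  set S : ℝ := 1 + α * ∑ l, contr P yc l with hS
  have hSsum : ∑ i, b i = S := by
    simp only [hb, hS, Finset.sum_add_distrib, ← Finset.mul_sum, hv1]; ring
  have hS1 : (1:ℝ) ≤ S := le_add_of_nonneg_right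
    (mul_nonneg hα0 (Finset.sum_nonneg fun l _ => hc0 l))
  have hS0 : (0:ℝ) < S := lt_of_lt_of_le one_pos hS1
  have hPhi : ∀ i, Phi (m+2) P v α yc i = S ^ e * b i := by
    intro i
    simp only [Phi, hcast, ← hS, hb]
    ring
  have he1 : e + 1 = 1/((m:ℝ)+1) := by rw [he]; field_simp; ring
  have hsum : ∑ l, Phi (m+2) P v α yc l = S ^ ((1:ℝ)/((m:ℝ)+1)) := by
    rw [Finset.sum_congr rfl fun l _ => hPhi l, ← Finset.mul_sum, hSsum, ← he1,
      Real.rpow_add_one hS0.ne' e]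
  have hpowm : (S ^ ((1:ℝ)/((m:ℝ)+1))) ^ m = S ^ ((m:ℝ)/((m:ℝ)+1)) := by
    rw [← Real.rpow_natCast (S ^ ((1:ℝ)/((m:ℝ)+1))) m, ← Real.rpow_mul hS0.le]
    congr 1; field_simp
  have hSm : (0:ℝ) < S ^ ((m:ℝ)/((m:ℝ)+1)) := Real.rpow_pos_of_pos hS0 _
  have hmain : ∀ i, (∑ l, Phi (m+2) P v α yc l) ^ (m+2-2) * Phi (m+2) P v α yc i = b i := by
    intro i
    rw [hkm2, hsum, hPhi i, hpowm, ← mul_assoc, ← Real.rpow_add hS0]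
    have h0 : (m:ℝ)/((m:ℝ)+1) + e = 0 := by rw [he]; ring
    rw [h0, Real.rpow_zero, one_mul]
  refine ⟨hmain, ?_, ?_, ?_, ?_⟩
  · intro i
    have hSsum' : ∑ l, (α * contr P yc l + v l) = S := hSsum
    rw [hPhi i, hSsum', hcast, hb]
  · intro i
    rw [hPhi i]
    exact mul_nonneg (Real.rpow_nonneg hS0.le _) (hb0 i)
  · -- sum bound
    have hyc_sum0 : 0 ≤ ∑ i, yc i := Finset.sum_nonneg fun i _ => hyc0 i
    have h1α : (0:ℝ) < 1 - α := by linarith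
    have hcontr_le : ∑ i, contr P yc i ≤ (∑ i, yc i) ^ (m+1) := by
      have h1 : ∑ i, contr P yc i
          = ∑ j : Fin (m+1) → Fin n, (∑ i, P i j) * ∏ s, yc (j s) := by
        rw [show ∑ i, contr P yc i = ∑ i, ∑ j : Fin (m+1) → Fin n, P i j * ∏ s, yc (j s) from rfl,
          Finset.sum_comm]
        exact Finset.sum_congr rfl fun j _ => (Finset.sum_mul _ _ _).symm
      have h2 : (∑ i, yc i) ^ (m+1) = ∑ j : Fin (m+1) → Fin n, ∏ s, yc (j s) := by
        rw [Finset.sum_pow', Fintype.piFinset_univ]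
      rw [h1, h2]
      refine Finset.sum_le_sum fun j _ => ?_
      have hp : 0 ≤ ∏ s, yc (j s) := Finset.prod_nonneg fun s _ => hyc0 _
      calc (∑ i, P i j) * ∏ s, yc (j s) ≤ 1 * ∏ s, yc (j s) :=
            mul_le_mul_of_nonneg_right (hPs j) hp
        _ = ∏ s, yc (j s) := one_mul _
    have hycpow : (∑ i, yc i) ^ (m+1) ≤ (1-α)⁻¹ := by
      calc (∑ i, yc i) ^ (m+1)
          ≤ ((1-α) ^ (-(1:ℝ)/((m:ℝ)+1))) ^ (m+1) := by
            apply pow_le_pow_left₀ hyc_sum0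
            rw [← hcast1]; exact hycΔ
        _ = (1-α)⁻¹ := by
            rw [← Real.rpow_natCast ((1-α) ^ (-(1:ℝ)/((m:ℝ)+1))) (m+1),
              ← Real.rpow_mul h1α.le]
            rw [show (-(1:ℝ)/((m:ℝ)+1)) * ((m+1:ℕ):ℝ) = -1 by push_cast; field_simp]
            exact Real.rpow_neg_one _
    have hSle : S ≤ (1-α)⁻¹ := by
      have h3 : α * ∑ l, contr P yc l ≤ α * (1-α)⁻¹ :=
        mul_le_mul_of_nonneg_left (hcontr_le.trans hycpow) hα0
      have heq : 1 + α * (1-α)⁻¹ = (1-α)⁻¹ := by field_simp; ring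
      rw [hS]; linarith
    rw [hsum, hcast1, hneg1, Real.rpow_neg h1α.le, ← Real.inv_rpow h1α.le]
    exact Real.rpow_le_rpow hS0.le hSle (by positivity)
  · -- uniqueness
    intro y hy0 hyeq
    set T : ℝ := ∑ l, y l with hT
    have hT0 : 0 ≤ T := Finset.sum_nonneg fun l _ => hy0 l
    have hTsum : T ^ (m+1) = S := by
      have h3 : ∑ i, (T ^ (m+2-2) * y i) = ∑ i, (α * contr P yc i + v i) :=
        Finset.sum_congr rfl fun i _ => hyeq i
      rw [← Finset.mul_sum, hkm2] at h3
      have h4 : ∑ i, (α * contr P yc i + v i) = S := hSsum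
      rw [pow_succ]
      nth_rewrite 2 [hT]
      rw [h3, h4]
    have hTpos : 0 < T := by
      rcases hT0.lt_or_eq with h | h
      · exact h
      · exfalso
        rw [← h, zero_pow (by omega : m + 1 ≠ 0)] at hTsum
        linarith
    have hTS : T = S ^ ((1:ℝ)/((m:ℝ)+1)) := by
      rw [← hTsum, ← Real.rpow_natCast T (m+1), ← Real.rpow_mul hTpos.le]
      rw [show (((m+1:ℕ)):ℝ) * (1/((m:ℝ)+1)) = 1 by push_cast; field_simp, Real.rpow_one]
    have hTm : T ^ m = S ^ ((m:ℝ)/((m:ℝ)+1)) := by rw [hTS, hpowm]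
    funext i
    have h := hyeq i
    rw [hkm2, hTm] at h
    rw [hPhi i]
    show y i = S ^ e * (α * contr P yc i + v i)
    have hSe : S ^ e = (S ^ ((m:ℝ)/((m:ℝ)+1)))⁻¹ := by
      rw [← Real.rpow_neg hS0.le]; congr 1; rw [he]; ring
    rw [hSe, ← h, inv_mul_cancel_left₀ hSm.ne']
end
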